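/- There exist a hyperconvex diversity (X, δ) with bounded induced metric space and a decreasing sequence (X_n)_{n≥1} of subsets of X such that each restriction (X_n, δ) is a hyperconvex diversity while ⋂_{n≥1} X_n = ∅. In particular, decreasing sequences of hyperconvex diversities with bounded induced metric spaces do not have the nonempty intersection property in general. -/

import Mathlib

/-- A diversity on `X`. -/
structure Diversity (X : Type*) [DecidableEq X] where
  delta : Finset X → ℝ
  nonneg : ∀ A, 0 ≤ delta A
  eq_zero_iff : ∀ A, delta A = 0 ↔ A.card ≤ 1
  triangle : ∀ A B C : Finset X, B.Nonempty →
    delta (A ∪ C) ≤ delta (A ∪ B) + delta (B ∪ C)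

namespace Diversity

variable {X : Type*} [DecidableEq X]

/-- Hyperconvexity of a diversity. -/
def Hyperconvex (D : Diversity X) : Prop :=
  ∀ r : Finset X → ℝ, r ∅ = 0 →
    (∀ 𝒜 : Finset (Finset X), D.delta (𝒜.sup id) ≤ ∑ A ∈ 𝒜, r A) →
    ∃ z : X, ∀ Y : Finset X, D.delta (insert z Y) ≤ r Y

/-- A diversity is bounded if its values are uniformly bounded above. -/
def Bounded (D : Diversity X) : Prop :=
  ∃ M : ℝ, 0 ≤ M ∧ ∀ A : Finset X, D.delta A ≤ M

/-- The restriction of a diversity to a subset `H ⊆ X`. -/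
def restrict (D : Diversity X) (H : Set X) : Diversity H where
  delta A := D.delta (A.image Subtype.val)
  nonneg A := D.nonneg _
  eq_zero_iff A := by
    rw [D.eq_zero_iff, Finset.card_image_of_injective A Subtype.val_injective]
  triangle A B C hB := by
    have h := D.triangle (A.image Subtype.val) (B.image Subtype.val) (C.image Subtype.val)
      (hB.image _)
    simpa [Finset.image_union] using h

end Diversity


open Finset

namespace HypEx

set_option linter.unusedSectionVars false

variable {β : Type*} [DecidableEq β]

/-- base diversity value: (card - 1)⁺ -/
noncomputable def bdel (A : Finset β) : ℝ := max ((A.card : ℝ) - 1) 0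

lemma bdel_nonneg (A : Finset β) : 0 ≤ bdel A := le_max_right _ _

lemma bdel_empty : bdel (∅ : Finset β) = 0 := by simp [bdel]

lemma bdel_mono {A B : Finset β} (h : A ⊆ B) : bdel A ≤ bdel B := by
  unfold bdel
  have : (A.card : ℝ) ≤ B.card := by exact_mod_cast Finset.card_le_card h
  apply max_le_max <;> linarith

lemma bdel_le_card (A : Finset β) : bdel A ≤ (A.card : ℝ) := by
  unfold bdel
  apply max_le <;> [linarith; positivity]

lemma bdel_singleton_le (A : Finset β) (hA : A.Nonempty) : (A.card : ℝ) - 1 ≤ bdel A :=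
  le_max_left _ _

lemma bdel_eq_of_nonempty {A : Finset β} (h : A.Nonempty) : bdel A = (A.card : ℝ) - 1 := by
  unfold bdel
  have : 1 ≤ A.card := Finset.one_le_card.mpr h
  have : (1:ℝ) ≤ A.card := by exact_mod_cast this
  rw [max_eq_left]; linarith

lemma bdel_union_le_card_add (A B : Finset β) : bdel (A ∪ B) ≤ (A.card : ℝ) + bdel B := by
  rcases B.eq_empty_or_nonempty with rfl | hB
  · simp only [union_empty, bdel_empty, add_zero]; exact bdel_le_card A
  · rw [bdel_eq_of_nonempty (hB.mono Finset.subset_union_right)]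
    rw [bdel_eq_of_nonempty hB]
    have : ((A ∪ B).card : ℝ) ≤ (A.card : ℝ) + B.card := by
      exact_mod_cast Finset.card_union_le A B
    linarith

lemma bdel_union_le (A B : Finset β) : bdel (A ∪ B) ≤ bdel A + bdel B + 1 := by
  rcases A.eq_empty_or_nonempty with rfl | hA
  · simp only [empty_union]
    have h1 := bdel_nonneg (∅ : Finset β); have h2 := bdel_nonneg B
    rw [bdel_empty]; linarith
  · rw [bdel_eq_of_nonempty hA]
    have h1 := bdel_union_le_card_add A B
    linarith

/-- sum of cards dominates card of sup -/
lemma card_sup_le (𝒟 : Finset (Finset β)) : ((𝒟.sup id).card : ℝ) ≤ ∑ D ∈ 𝒟, (D.card : ℝ) := by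
  induction 𝒟 using Finset.induction_on with
  | empty => simp
  | @insert D 𝒟' hD ih =>
    rw [Finset.sup_insert, Finset.sum_insert hD]
    have : (((id D ⊔ 𝒟'.sup id)).card : ℝ) ≤ (D.card : ℝ) + ((𝒟'.sup id).card : ℝ) := by
      exact_mod_cast Finset.card_union_le D (𝒟'.sup id)
    linarith

lemma sum_union_le {s t : Finset (Finset β)} {g : Finset β → ℝ} (hg : ∀ A, 0 ≤ g A) :
    ∑ A ∈ s ∪ t, g A ≤ ∑ A ∈ s, g A + ∑ A ∈ t, g A := by
  rw [← Finset.sum_union_inter]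
  have : 0 ≤ ∑ A ∈ s ∩ t, g A := Finset.sum_nonneg fun A _ => hg A
  linarith

/-- sum over a sup of families bounded by double sum (nonneg weights) -/
lemma sum_sup_le {γ : Type*} [DecidableEq γ] (𝔖 : Finset γ) (f : γ → Finset (Finset β))
    (g : Finset β → ℝ) (hg : ∀ A, 0 ≤ g A) :
    ∑ A ∈ 𝔖.sup f, g A ≤ ∑ s ∈ 𝔖, ∑ A ∈ f s, g A := by
  induction 𝔖 using Finset.induction_on with
  | empty => simp
  | @insert s 𝔖' hD ih =>
    rw [Finset.sup_insert, Finset.sum_insert hD]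
    calc ∑ A ∈ f s ⊔ 𝔖'.sup f, g A ≤ ∑ A ∈ f s, g A + ∑ A ∈ 𝔖'.sup f, g A :=
          sum_union_le hg
      _ ≤ _ := by linarith

/-- sum over image is at most sum over source for nonneg weights -/
lemma sum_image_le {γ : Type*} [DecidableEq γ] (s : Finset γ) (φ : γ → Finset β)
    (g : Finset β → ℝ) (hg : ∀ A, 0 ≤ g A) :
    ∑ A ∈ s.image φ, g A ≤ ∑ x ∈ s, g (φ x) := by
  induction s using Finset.induction_on with
  | empty => simp
  | @insert x s' hD ih =>
    rw [Finset.image_insert, Finset.sum_insert hD]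
    by_cases hx : φ x ∈ s'.image φ
    · rw [Finset.insert_eq_self.mpr hx]
      have := hg (φ x); linarith
    · rw [Finset.sum_insert hx]; linarith

set_option linter.unusedVariables false


/-- admissible profile over the base diversity (card-1)⁺ -/
def Adm (p : Finset β → ℝ) : Prop :=
  ∀ 𝒟 : Finset (Finset β), bdel (𝒟.sup id) ≤ ∑ D ∈ 𝒟, p D

/-- tight (ε-realization) profile -/
def Tight (p : Finset β → ℝ) : Prop :=
  ∀ A : Finset β, ∀ ε : ℝ, 0 < ε →
    ∃ 𝒟 : Finset (Finset β), A ∉ 𝒟 ∧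
      p A - ε ≤ bdel (A ∪ 𝒟.sup id) - ∑ D ∈ 𝒟, p D

lemma Adm.le (hp : Adm p) (A : Finset β) : bdel A ≤ p A := by
  have := hp {A}; simpa using this

lemma Adm.nonneg (hp : Adm p) (A : Finset β) : 0 ≤ p A :=
  le_trans (by exact le_max_right _ _) (hp.le A)

lemma Adm.insert_le (hp : Adm p) {A : Finset β} {𝒟 : Finset (Finset β)} (hA : A ∉ 𝒟) :
    bdel (A ∪ 𝒟.sup id) ≤ p A + ∑ D ∈ 𝒟, p D := by
  have := hp (insert A 𝒟)
  rwa [Finset.sup_insert, Finset.sum_insert hA] at this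

/-- tight implies minimal among admissible profiles -/
lemma Tight.le_of_adm_le {p q : Finset β → ℝ} (hpt : Tight p) (hq : Adm q) (hle : ∀ A, q A ≤ p A) :
    ∀ A, p A ≤ q A := by
  intro A
  apply le_of_forall_pos_le_add
  intro ε hε
  obtain ⟨𝒟, hA𝒟, hreal⟩ := hpt A ε hε
  have h1 : bdel (A ∪ 𝒟.sup id) ≤ q A + ∑ D ∈ 𝒟, q D := hq.insert_le hA𝒟
  have h2 : ∑ D ∈ 𝒟, q D ≤ ∑ D ∈ 𝒟, p D := Finset.sum_le_sum fun D _ => hle D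
  linarith

/-- the points of our big hyperconvex diversity: tight admissible profiles -/
def TS (β : Type*) [DecidableEq β] : Type _ := {p : Finset β → ℝ // Adm p ∧ Tight p}

noncomputable instance : DecidableEq (TS β) := Classical.decEq _

namespace TS

lemma adm (p : TS β) : Adm p.1 := p.2.1
lemma tight (p : TS β) : Tight p.1 := p.2.2
lemma nonneg (p : TS β) (A : Finset β) : 0 ≤ p.1 A := p.adm.nonneg A
lemma bdel_le (p : TS β) (A : Finset β) : bdel A ≤ p.1 A := p.adm.le A

lemma empty_eq_zero (p : TS β) : p.1 ∅ = 0 := by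
  refine le_antisymm ?_ ?_
  · apply le_of_forall_pos_le_add
    intro ε hε
    obtain ⟨𝒟, hmem, hreal⟩ := p.tight ∅ ε hε
    have := p.adm 𝒟
    simp only [Finset.empty_union] at hreal
    linarith
  · have := p.bdel_le ∅
    have h0 : bdel (∅ : Finset β) = 0 := bdel_empty
    linarith

/-- defining value of the tight-span diversity -/
noncomputable def dval (F : Finset (TS β)) (α : TS β → Finset (Finset β)) : ℝ :=
  bdel (F.sup fun p => (α p).sup id) - ∑ p ∈ F, ∑ A ∈ α p, p.1 A

noncomputable def ddelta (F : Finset (TS β)) : ℝ :=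
  sSup (Set.range (dval F))

lemma dval_le_card (F : Finset (TS β)) (α : TS β → Finset (Finset β)) :
    dval F α ≤ (F.card : ℝ) := by
  unfold dval
  have h1 : bdel (F.sup fun p => (α p).sup id) ≤
      ∑ p ∈ F, (bdel ((α p).sup id) + 1) := by
    induction F using Finset.induction_on with
    | empty => simp [bdel]
    | @insert q F' hq ih =>
      rw [Finset.sup_insert, Finset.sum_insert hq]
      calc bdel ((α q).sup id ⊔ F'.sup fun p => (α p).sup id)
          ≤ bdel ((α q).sup id) + bdel (F'.sup fun p => (α p).sup id) + 1 := bdel_union_le _ _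
        _ ≤ _ := by linarith
  have h2 : ∀ p ∈ F, bdel ((α p).sup id) ≤ ∑ A ∈ α p, p.1 A := fun p _ => p.adm (α p)
  have h3 : ∑ p ∈ F, (bdel ((α p).sup id) + 1) ≤ (∑ p ∈ F, ∑ A ∈ α p, p.1 A) + F.card := by
    rw [Finset.sum_add_distrib]
    simp only [Finset.sum_const, nsmul_eq_mul, mul_one]
    have := Finset.sum_le_sum h2
    linarith
  linarith

lemma dval_zero_mem (F : Finset (TS β)) : (0:ℝ) ∈ Set.range (dval F) := by
  refine ⟨fun _ => ∅, ?_⟩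
  unfold dval
  have hsup : (F.sup fun _ => (∅ : Finset (Finset β)).sup id) = ∅ := by
    refine le_antisymm ?_ bot_le
    apply Finset.sup_le; intro p _; simp
  simp only [hsup, bdel_empty, Finset.sum_empty, Finset.sum_const_zero, sub_zero]

lemma bddAbove_dval (F : Finset (TS β)) : BddAbove (Set.range (dval F)) := by
  refine ⟨(F.card : ℝ), ?_⟩
  rintro x ⟨α, rfl⟩
  exact dval_le_card F α

lemma ddelta_nonneg (F : Finset (TS β)) : 0 ≤ ddelta F :=
  le_csSup (bddAbove_dval F) (dval_zero_mem F)

lemma dval_le_ddelta (F : Finset (TS β)) (α : TS β → Finset (Finset β)) :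
    dval F α ≤ ddelta F :=
  le_csSup (bddAbove_dval F) ⟨α, rfl⟩

lemma ddelta_le (F : Finset (TS β)) {c : ℝ} (h : ∀ α, dval F α ≤ c) : ddelta F ≤ c := by
  apply csSup_le ⟨0, dval_zero_mem F⟩
  rintro x ⟨α, rfl⟩; exact h α

lemma ddelta_mono {F G : Finset (TS β)} (h : F ⊆ G) : ddelta F ≤ ddelta G := by
  apply ddelta_le
  intro α
  have : dval F α = dval G (fun p => if p ∈ F then α p else ∅) := by
    unfold dval
    congr 1
    · congr 1
      refine le_antisymm ?_ ?_
      · apply Finset.sup_le; intro p hp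
        refine le_trans ?_ (Finset.le_sup (h hp))
        simp [hp]
      · apply Finset.sup_le; intro p hp
        by_cases hpF : p ∈ F
        · refine le_trans ?_ (Finset.le_sup hpF); simp [hpF]
        · simp [hpF]
    · rw [← Finset.sum_subset h]
      · apply Finset.sum_congr rfl
        intro p hp; simp [hp]
      · intro p hp hpF; simp [hpF]
  rw [this]
  exact dval_le_ddelta G _
end TS
end HypEx

namespace HypEx
set_option linter.unusedSectionVars false
set_option linter.unusedVariables false
variable {β : Type*} [DecidableEq β]
namespace TS

lemma ddelta_pos_of_ne {p q : TS β} (h : p ≠ q) : 0 < ddelta ({p, q} : Finset (TS β)) := by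
  rcases lt_or_ge 0 (ddelta ({p, q} : Finset (TS β))) with h0 | h0
  · exact h0
  exfalso
  -- min p q is admissible
  have hadm : Adm (fun A => min (p.1 A) (q.1 A)) := by
    intro 𝒞
    set 𝒜 := 𝒞.filter (fun C => p.1 C ≤ q.1 C) with h𝒜
    set ℬ := 𝒞.filter (fun C => ¬ p.1 C ≤ q.1 C) with hℬ
    have hsplit : ∑ D ∈ 𝒞, min (p.1 D) (q.1 D) = ∑ D ∈ 𝒜, p.1 D + ∑ D ∈ ℬ, q.1 D := by
      rw [h𝒜, hℬ, ← Finset.sum_filter_add_sum_filter_not 𝒞 (fun C => p.1 C ≤ q.1 C)]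
      congr 1
      · apply Finset.sum_congr rfl; intro D hD
        simp only [Finset.mem_filter] at hD
        exact min_eq_left hD.2
      · apply Finset.sum_congr rfl; intro D hD
        simp only [Finset.mem_filter] at hD
        exact min_eq_right (le_of_lt (not_le.mp hD.2))
    set α : TS β → Finset (Finset β) := fun t => if t = p then 𝒜 else if t = q then ℬ else ∅
      with hα
    have hval : dval ({p, q} : Finset (TS β)) α = bdel (𝒞.sup id) - ∑ D ∈ 𝒞, min (p.1 D) (q.1 D) := by
      unfold dval
      have hpair : ({p, q} : Finset (TS β)) = insert p {q} := rfl
      have hpq : p ∉ ({q} : Finset (TS β)) := by simp [h]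
      have hsum : ∑ t ∈ ({p, q} : Finset (TS β)), ∑ A ∈ α t, t.1 A
          = ∑ A ∈ 𝒜, p.1 A + ∑ A ∈ ℬ, q.1 A := by
        rw [hpair, Finset.sum_insert hpq, Finset.sum_singleton]
        have h1 : α p = 𝒜 := by simp [hα]
        have h2 : α q = ℬ := by simp [hα, Ne.symm h]
        rw [h1, h2]
      have hsup : (({p, q} : Finset (TS β)).sup fun t => (α t).sup id) = 𝒞.sup id := by
        rw [hpair, Finset.sup_insert, Finset.sup_singleton]
        have h1 : α p = 𝒜 := by simp [hα]
        have h2 : α q = ℬ := by simp [hα, Ne.symm h]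
        rw [h1, h2]
        rw [← Finset.sup_union]
        congr 1
        rw [h𝒜, hℬ, Finset.filter_union_filter_not_eq]
      rw [hsum, hsup, hsplit]
    have := dval_le_ddelta ({p, q} : Finset (TS β)) α
    rw [hval] at this
    linarith
  have h1 := Tight.le_of_adm_le p.tight hadm (fun A => min_le_left _ _)
  have h2 := Tight.le_of_adm_le q.tight hadm (fun A => min_le_right _ _)
  apply h
  apply Subtype.ext
  funext A
  have ha := h1 A; have hb := h2 A
  simp only [le_min_iff] at ha hb
  linarith [ha.2, hb.1]

lemma ddelta_eq_zero_iff (F : Finset (TS β)) : ddelta F = 0 ↔ F.card ≤ 1 := by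
  constructor
  · intro h0
    by_contra hc
    push_neg at hc
    obtain ⟨p, hp, q, hq, hpq⟩ := Finset.one_lt_card.mp hc
    have hsub : ({p, q} : Finset (TS β)) ⊆ F := by
      intro t ht
      simp only [Finset.mem_insert, Finset.mem_singleton] at ht
      rcases ht with rfl | rfl <;> assumption
    have := ddelta_mono hsub
    have := ddelta_pos_of_ne hpq
    linarith
  · intro h1
    refine le_antisymm ?_ (ddelta_nonneg F)
    apply ddelta_le
    intro α
    interval_cases h : F.card
    · have hF : F = ∅ := Finset.card_eq_zero.mp h
      subst hF
      unfold dval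
      simp [bdel_empty]
    · obtain ⟨p, hF⟩ := Finset.card_eq_one.mp h
      subst hF
      unfold dval
      rw [Finset.sup_singleton, Finset.sum_singleton]
      have := p.adm (α p)
      linarith

lemma ddelta_triangle_disjoint (A B C : Finset (TS β)) (hB : B.Nonempty)
    (hAC : Disjoint A C) :
    ddelta (A ∪ C) ≤ ddelta (A ∪ B) + ddelta (B ∪ C) := by
  obtain ⟨g₀, hg₀⟩ := hB
  apply ddelta_le
  intro α
  apply le_of_forall_pos_le_add
  intro ε hε
  set EA := A.sup (fun t => (α t).sup id) with hEA
  set EC := C.sup (fun t => (α t).sup id) with hEC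
  obtain ⟨𝒟, h𝒟mem, h𝒟⟩ := g₀.tight EC ε hε
  rw [← Finset.sup_eq_union] at h𝒟
  -- first assignment
  set α₁ : TS β → Finset (Finset β) := fun t =>
    if t = g₀ then (if g₀ ∈ A then α g₀ else ∅) ∪ {EC} else if t ∈ A then α t else ∅ with hα₁
  set α₂ : TS β → Finset (Finset β) := fun t =>
    if t = g₀ then (if g₀ ∈ C then α g₀ else ∅) ∪ 𝒟 else if t ∈ C then α t else ∅ with hα₂
  have key1 : bdel (EA ⊔ EC) - (∑ t ∈ A, ∑ X ∈ α t, t.1 X) - g₀.1 EC ≤ dval (A ∪ B) α₁ := by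
    unfold dval
    have hsup : EA ⊔ EC ≤ (A ∪ B).sup fun t => (α₁ t).sup id := by
      apply sup_le
      · apply Finset.sup_le
        intro a ha
        refine le_trans ?_ (Finset.le_sup (Finset.mem_union_left B ha))
        apply Finset.sup_le
        intro X hX
        apply Finset.le_sup
        by_cases hag : a = g₀
        · subst hag
          simp only [hα₁, if_pos rfl, if_pos ha, Finset.mem_union]
          exact Or.inl hX
        · simp only [hα₁, if_neg hag, if_pos ha]
          exact hX
      · have hECmem : EC ∈ α₁ g₀ := by simp [hα₁]
        exact le_trans (Finset.le_sup (f := id) hECmem)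
          (Finset.le_sup (f := fun t => (α₁ t).sup id) (Finset.mem_union_right A hg₀))
    have hsum : ∑ t ∈ A ∪ B, ∑ X ∈ α₁ t, t.1 X
        ≤ (∑ t ∈ A, ∑ X ∈ α t, t.1 X) + g₀.1 EC := by
      have hbound : ∀ t ∈ A ∪ B, ∑ X ∈ α₁ t, t.1 X ≤
          (if t ∈ A then ∑ X ∈ α t, t.1 X else 0) + (if t = g₀ then g₀.1 EC else 0) := by
        intro t ht
        by_cases htg : t = g₀
        · subst htg
          simp only [hα₁, if_pos rfl]
          by_cases hgA : t ∈ A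
          · simp only [if_pos hgA]
            calc ∑ X ∈ α t ∪ {EC}, t.1 X ≤ ∑ X ∈ α t, t.1 X + ∑ X ∈ ({EC} : Finset (Finset β)), t.1 X :=
                  sum_union_le (fun X => t.nonneg X)
              _ = ∑ X ∈ α t, t.1 X + t.1 EC := by rw [Finset.sum_singleton]
          · simp only [if_neg hgA]
            rw [Finset.empty_union, Finset.sum_singleton]
            simp
        · simp only [hα₁, if_neg htg]
          by_cases htA : t ∈ A
          · simp [htA]
          · simp [htA]
      calc ∑ t ∈ A ∪ B, ∑ X ∈ α₁ t, t.1 X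
          ≤ ∑ t ∈ A ∪ B, ((if t ∈ A then ∑ X ∈ α t, t.1 X else 0) + (if t = g₀ then g₀.1 EC else 0)) :=
            Finset.sum_le_sum hbound
        _ = (∑ t ∈ A ∪ B, if t ∈ A then ∑ X ∈ α t, t.1 X else 0)
            + (∑ t ∈ A ∪ B, if t = g₀ then g₀.1 EC else 0) := Finset.sum_add_distrib
        _ = (∑ t ∈ A, ∑ X ∈ α t, t.1 X) + g₀.1 EC := by
            congr 1
            · rw [Finset.sum_ite_mem, Finset.inter_eq_right.mpr Finset.subset_union_left]
            · rw [Finset.sum_ite_eq' (A ∪ B) g₀ (fun _ => g₀.1 EC)]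
              simp [Finset.mem_union, hg₀]
    have := bdel_mono hsup
    linarith
  have key2 : g₀.1 EC - ε - (∑ t ∈ C, ∑ X ∈ α t, t.1 X) ≤ dval (B ∪ C) α₂ := by
    unfold dval
    have hsup : EC ⊔ 𝒟.sup id ≤ (B ∪ C).sup fun t => (α₂ t).sup id := by
      apply sup_le
      · apply Finset.sup_le
        intro c hc
        refine le_trans ?_ (Finset.le_sup (Finset.mem_union_right B hc))
        apply Finset.sup_le
        intro X hX
        apply Finset.le_sup
        by_cases hcg : c = g₀
        · subst hcg
          simp only [hα₂, if_pos rfl, if_pos hc, Finset.mem_union]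
          exact Or.inl hX
        · simp only [hα₂, if_neg hcg, if_pos hc]
          exact hX
      · refine le_trans ?_ (Finset.le_sup (Finset.mem_union_left C hg₀))
        apply Finset.sup_le
        intro X hX
        have hXmem : X ∈ α₂ g₀ := by
          simp only [hα₂, if_pos rfl, Finset.mem_union]
          exact Or.inr hX
        exact Finset.le_sup (f := id) hXmem
    have hsum : ∑ t ∈ B ∪ C, ∑ X ∈ α₂ t, t.1 X
        ≤ (∑ t ∈ C, ∑ X ∈ α t, t.1 X) + ∑ D ∈ 𝒟, g₀.1 D := by
      have hbound : ∀ t ∈ B ∪ C, ∑ X ∈ α₂ t, t.1 X ≤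
          (if t ∈ C then ∑ X ∈ α t, t.1 X else 0) + (if t = g₀ then ∑ D ∈ 𝒟, g₀.1 D else 0) := by
        intro t ht
        by_cases htg : t = g₀
        · subst htg
          simp only [hα₂, if_pos rfl]
          by_cases hgC : t ∈ C
          · simp only [if_pos hgC]
            exact sum_union_le (fun X => t.nonneg X)
          · simp only [if_neg hgC]
            rw [Finset.empty_union]
            simp
        · simp only [hα₂, if_neg htg]
          by_cases htC : t ∈ C
          · simp [htC]
          · simp [htC]
      calc ∑ t ∈ B ∪ C, ∑ X ∈ α₂ t, t.1 X
          ≤ ∑ t ∈ B ∪ C, ((if t ∈ C then ∑ X ∈ α t, t.1 X else 0) + (if t = g₀ then ∑ D ∈ 𝒟, g₀.1 D else 0)) :=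
            Finset.sum_le_sum hbound
        _ = (∑ t ∈ B ∪ C, if t ∈ C then ∑ X ∈ α t, t.1 X else 0)
            + (∑ t ∈ B ∪ C, if t = g₀ then ∑ D ∈ 𝒟, g₀.1 D else 0) := Finset.sum_add_distrib
        _ = (∑ t ∈ C, ∑ X ∈ α t, t.1 X) + ∑ D ∈ 𝒟, g₀.1 D := by
            congr 1
            · rw [Finset.sum_ite_mem, Finset.inter_eq_right.mpr Finset.subset_union_right]
            · rw [Finset.sum_ite_eq' (B ∪ C) g₀ (fun _ => ∑ D ∈ 𝒟, g₀.1 D)]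
              simp [Finset.mem_union, hg₀]
    have hb := bdel_mono hsup
    linarith
  have hval : dval (A ∪ C) α = bdel (EA ⊔ EC) - ((∑ t ∈ A, ∑ X ∈ α t, t.1 X) + (∑ t ∈ C, ∑ X ∈ α t, t.1 X)) := by
    unfold dval
    rw [Finset.sup_union, Finset.sum_union hAC]
  have h1 := dval_le_ddelta (A ∪ B) α₁
  have h2 := dval_le_ddelta (B ∪ C) α₂
  rw [hval]
  linarith

lemma ddelta_triangle (A B C : Finset (TS β)) (hB : B.Nonempty) :
    ddelta (A ∪ C) ≤ ddelta (A ∪ B) + ddelta (B ∪ C) := by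
  have h1 : A ∪ C = A ∪ (C \ A) := by
    rw [Finset.union_sdiff_self_eq_union]
  have h2 : Disjoint A (C \ A) := Finset.disjoint_sdiff
  calc ddelta (A ∪ C) = ddelta (A ∪ (C \ A)) := by rw [← h1]
    _ ≤ ddelta (A ∪ B) + ddelta (B ∪ (C \ A)) := ddelta_triangle_disjoint A B (C \ A) hB h2
    _ ≤ ddelta (A ∪ B) + ddelta (B ∪ C) := by
        have := ddelta_mono (Finset.union_subset_union_right (Finset.sdiff_subset) : B ∪ (C \ A) ⊆ B ∪ C)
        linarith

/-- the tight-span diversity -/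
noncomputable def TDiv (β : Type*) [DecidableEq β] : Diversity (TS β) where
  delta := ddelta
  nonneg := ddelta_nonneg
  eq_zero_iff := ddelta_eq_zero_iff
  triangle := ddelta_triangle

lemma ddelta_pair_le_one (p q : TS β) : ddelta ({p, q} : Finset (TS β)) ≤ 1 := by
  apply ddelta_le
  intro α
  unfold dval
  by_cases h : p = q
  · subst h
    have hpp : ({p, p} : Finset (TS β)) = {p} := by simp
    rw [hpp, Finset.sup_singleton, Finset.sum_singleton]
    have h1 := p.adm (α p)
    have h2 := bdel_nonneg ((α p).sup id)
    linarith
  · have hpq : p ∉ ({q} : Finset (TS β)) := by simp [h]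
    have hpair : ({p, q} : Finset (TS β)) = insert p {q} := rfl
    rw [hpair, Finset.sup_insert, Finset.sup_singleton, Finset.sum_insert hpq,
      Finset.sum_singleton]
    have h1 := p.adm (α p)
    have h2 := q.adm (α q)
    have h3 := bdel_union_le ((α p).sup id) ((α q).sup id)
    rw [← Finset.sup_eq_union] at h3
    linarith

end TS
end HypEx
-- appended to work.lean for testing
namespace HypEx
set_option linter.unusedSectionVars false
set_option linter.unusedVariables false
set_option maxHeartbeats 1000000
variable {β : Type*} [DecidableEq β]
namespace TS

section Hyp
variable (R : Finset (TS β) → ℝ)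

/-- union of all base sets used by an assignment to a family of finite subsets of TS β -/
noncomputable def Wset (𝔉 : Finset (Finset (TS β)))
    (αc : Finset (TS β) → TS β → Finset (Finset β)) : Finset β :=
  𝔉.sup fun F => F.sup fun p => (αc F p).sup id

noncomputable def Cost (𝔉 : Finset (Finset (TS β)))
    (αc : Finset (TS β) → TS β → Finset (Finset β)) : ℝ :=
  ∑ F ∈ 𝔉, ∑ p ∈ F, ∑ A ∈ αc F p, p.1 A

/-- the key family of constraints on a candidate witness profile -/
def Constr (h : Finset β → ℝ) : Prop :=
  ∀ (ℬ : Finset (Finset β)) (𝔉 : Finset (Finset (TS β)))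
    (αc : Finset (TS β) → TS β → Finset (Finset β)),
    bdel (ℬ.sup id ∪ Wset 𝔉 αc) - Cost 𝔉 αc - ∑ F ∈ 𝔉, R F ≤ ∑ A ∈ ℬ, h A

variable {R}
variable (hV : ∀ 𝒢 : Finset (Finset (TS β)), ddelta (𝒢.sup id) ≤ ∑ F ∈ 𝒢, R F)

include hV

lemma R_nonneg (F : Finset (TS β)) : 0 ≤ R F := by
  have := hV {F}
  simp only [Finset.sup_singleton, Finset.sum_singleton, id] at this
  exact le_trans (ddelta_nonneg F) this

lemma ddelta_le_R (F : Finset (TS β)) : ddelta F ≤ R F := by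
  have := hV {F}
  simpa using this

lemma Wset_bound (𝔉 : Finset (Finset (TS β))) (αc : Finset (TS β) → TS β → Finset (Finset β)) :
    bdel (Wset 𝔉 αc) ≤ Cost 𝔉 αc + ∑ F ∈ 𝔉, R F := by
  classical
  set G : Finset (TS β) := 𝔉.sup id with hG
  set α' : TS β → Finset (Finset β) := fun p => 𝔉.sup (fun F => if p ∈ F then αc F p else ∅)
    with hα'
  have claim1 : Wset 𝔉 αc ≤ G.sup fun p => (α' p).sup id := by
    apply Finset.sup_le
    intro F hF
    apply Finset.sup_le
    intro p hp
    have hpG : p ∈ G := by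
      rw [hG]
      exact Finset.le_sup (f := id) hF hp
    refine le_trans ?_ (Finset.le_sup hpG)
    apply Finset.sup_mono
    rw [hα']
    refine le_trans ?_ (Finset.le_sup (f := fun F => if p ∈ F then αc F p else ∅) hF)
    simp [hp]
  have claim2 : ∑ p ∈ G, ∑ A ∈ α' p, p.1 A ≤ Cost 𝔉 αc := by
    have step1 : ∀ p ∈ G, ∑ A ∈ α' p, p.1 A ≤
        ∑ F ∈ 𝔉, (if p ∈ F then ∑ A ∈ αc F p, p.1 A else 0) := by
      intro p _
      rw [hα']
      calc ∑ A ∈ 𝔉.sup (fun F => if p ∈ F then αc F p else ∅), p.1 A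
          ≤ ∑ F ∈ 𝔉, ∑ A ∈ (if p ∈ F then αc F p else ∅), p.1 A :=
            sum_sup_le 𝔉 _ _ (fun A => p.nonneg A)
        _ = ∑ F ∈ 𝔉, (if p ∈ F then ∑ A ∈ αc F p, p.1 A else 0) := by
            apply Finset.sum_congr rfl
            intro F _
            by_cases hpF : p ∈ F <;> simp [hpF]
    calc ∑ p ∈ G, ∑ A ∈ α' p, p.1 A
        ≤ ∑ p ∈ G, ∑ F ∈ 𝔉, (if p ∈ F then ∑ A ∈ αc F p, p.1 A else 0) :=
          Finset.sum_le_sum step1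
      _ = ∑ F ∈ 𝔉, ∑ p ∈ G, (if p ∈ F then ∑ A ∈ αc F p, p.1 A else 0) := Finset.sum_comm
      _ = Cost 𝔉 αc := by
          unfold Cost
          apply Finset.sum_congr rfl
          intro F hF
          rw [Finset.sum_ite_mem, Finset.inter_eq_right.mpr]
          rw [hG]
          intro p hp
          exact Finset.le_sup (f := id) hF hp
  have hdval : bdel (Wset 𝔉 αc) - Cost 𝔉 αc ≤ dval G α' := by
    unfold dval
    have := bdel_mono claim1
    linarith
  have h2 := dval_le_ddelta G α'
  have h3 := hV 𝔉
  rw [← hG] at h3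
  linarith

lemma constr_card : Constr R (fun A => (A.card : ℝ)) := by
  intro ℬ 𝔉 αc
  have h1 : bdel (ℬ.sup id ∪ Wset 𝔉 αc) ≤ ((ℬ.sup id).card : ℝ) + bdel (Wset 𝔉 αc) :=
    bdel_union_le_card_add _ _
  have h2 := card_sup_le ℬ
  have h3 := Wset_bound hV 𝔉 αc
  simp only at *
  linarith

omit hV

lemma Constr.bdel_le {h : Finset β → ℝ} (hh : Constr R h) (A : Finset β) : bdel A ≤ h A := by
  have := hh {A} ∅ (fun _ _ => ∅)
  simp only [Finset.sup_singleton, Finset.sum_singleton, Finset.sum_empty, id] at this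
  unfold Wset Cost at this
  simp only [Finset.sup_empty, Finset.sum_empty, Finset.union_empty, sub_zero] at this
  convert this using 2
  simp

lemma Constr.nonneg {h : Finset β → ℝ} (hh : Constr R h) (A : Finset β) : 0 ≤ h A :=
  le_trans (bdel_nonneg A) (hh.bdel_le A)

lemma Constr.adm {h : Finset β → ℝ} (hh : Constr R h) : Adm h := by
  intro 𝒟
  have := hh 𝒟 ∅ (fun _ _ => ∅)
  unfold Wset Cost at this
  simp only [Finset.sup_empty, Finset.sum_empty, Finset.bot_eq_empty, Finset.union_empty,
    sub_zero] at this
  linarith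

include hV

/-- merge two constraint configurations -/
lemma merge_bound {h : Finset β → ℝ} (hh : Constr R h)
    (ℬ : Finset (Finset β)) (𝔉 𝔉' : Finset (Finset (TS β)))
    (αc αc' : Finset (TS β) → TS β → Finset (Finset β)) :
    bdel (ℬ.sup id ∪ Wset 𝔉 αc ∪ Wset 𝔉' αc')
      - (Cost 𝔉 αc + Cost 𝔉' αc') - (∑ F ∈ 𝔉, R F + ∑ F ∈ 𝔉', R F) ≤ ∑ A ∈ ℬ, h A := by
  classical
  set αm : Finset (TS β) → TS β → Finset (Finset β) := fun F p =>
    (if F ∈ 𝔉 then αc F p else ∅) ∪ (if F ∈ 𝔉' then αc' F p else ∅) with hαm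
  have hW : Wset 𝔉 αc ∪ Wset 𝔉' αc' ≤ Wset (𝔉 ∪ 𝔉') αm := by
    apply sup_le
    · unfold Wset
      apply Finset.sup_le
      intro F hF
      refine le_trans ?_ (Finset.le_sup (Finset.mem_union_left _ hF))
      apply Finset.sup_mono_fun
      intro p hp
      apply Finset.sup_mono
      rw [hαm]
      simp only [if_pos hF]
      exact Finset.subset_union_left
    · unfold Wset
      apply Finset.sup_le
      intro F hF
      refine le_trans ?_ (Finset.le_sup (Finset.mem_union_right _ hF))
      apply Finset.sup_mono_fun
      intro p hp
      apply Finset.sup_mono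
      rw [hαm]
      simp only [if_pos hF]
      exact Finset.subset_union_right
  have hC : Cost (𝔉 ∪ 𝔉') αm ≤ Cost 𝔉 αc + Cost 𝔉' αc' := by
    unfold Cost
    have step : ∀ F ∈ 𝔉 ∪ 𝔉', ∑ p ∈ F, ∑ A ∈ αm F p, p.1 A ≤
        (if F ∈ 𝔉 then ∑ p ∈ F, ∑ A ∈ αc F p, p.1 A else 0)
        + (if F ∈ 𝔉' then ∑ p ∈ F, ∑ A ∈ αc' F p, p.1 A else 0) := by
      intro F _
      have hper : ∀ p ∈ F, ∑ A ∈ αm F p, p.1 A ≤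
          (if F ∈ 𝔉 then ∑ A ∈ αc F p, p.1 A else 0)
          + (if F ∈ 𝔉' then ∑ A ∈ αc' F p, p.1 A else 0) := by
        intro p _
        rw [hαm]
        calc ∑ A ∈ (if F ∈ 𝔉 then αc F p else ∅) ∪ (if F ∈ 𝔉' then αc' F p else ∅), p.1 A
            ≤ ∑ A ∈ (if F ∈ 𝔉 then αc F p else ∅), p.1 A
              + ∑ A ∈ (if F ∈ 𝔉' then αc' F p else ∅), p.1 A := sum_union_le (fun A => p.nonneg A)
          _ ≤ _ := by
              apply add_le_add
              · by_cases hF : F ∈ 𝔉 <;> simp [hF]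
              · by_cases hF : F ∈ 𝔉' <;> simp [hF]
      calc ∑ p ∈ F, ∑ A ∈ αm F p, p.1 A ≤ ∑ p ∈ F,
            ((if F ∈ 𝔉 then ∑ A ∈ αc F p, p.1 A else 0)
            + (if F ∈ 𝔉' then ∑ A ∈ αc' F p, p.1 A else 0)) := Finset.sum_le_sum hper
        _ = _ := by
            rw [Finset.sum_add_distrib]
            congr 1
            · by_cases hF : F ∈ 𝔉 <;> simp [hF]
            · by_cases hF : F ∈ 𝔉' <;> simp [hF]
    calc ∑ F ∈ 𝔉 ∪ 𝔉', ∑ p ∈ F, ∑ A ∈ αm F p, p.1 A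
        ≤ ∑ F ∈ 𝔉 ∪ 𝔉', ((if F ∈ 𝔉 then ∑ p ∈ F, ∑ A ∈ αc F p, p.1 A else 0)
          + (if F ∈ 𝔉' then ∑ p ∈ F, ∑ A ∈ αc' F p, p.1 A else 0)) := Finset.sum_le_sum step
      _ = _ := by
          rw [Finset.sum_add_distrib]
          congr 1
          · rw [Finset.sum_ite_mem, Finset.inter_eq_right.mpr Finset.subset_union_left]
          · rw [Finset.sum_ite_mem, Finset.inter_eq_right.mpr Finset.subset_union_right]
  have hR : ∑ F ∈ 𝔉 ∪ 𝔉', R F ≤ ∑ F ∈ 𝔉, R F + ∑ F ∈ 𝔉', R F := by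
    rw [← Finset.sum_union_inter]
    have : 0 ≤ ∑ F ∈ 𝔉 ∩ 𝔉', R F := Finset.sum_nonneg fun F _ => R_nonneg hV F
    linarith
  have hmain := hh ℬ (𝔉 ∪ 𝔉') αm
  have hb : bdel (ℬ.sup id ∪ Wset 𝔉 αc ∪ Wset 𝔉' αc') ≤ bdel (ℬ.sup id ∪ Wset (𝔉 ∪ 𝔉') αm) := by
    apply bdel_mono
    rw [Finset.union_assoc]
    exact Finset.union_subset_union_right hW
  linarith

/-- a minimal element of Constr satisfies the W-value upper bounds -/
lemma minimal_W_le {h : Finset β → ℝ} (hh : Constr R h)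
    (hmin : ∀ h' : Finset β → ℝ, Constr R h' → h' ≤ h → h ≤ h')
    (𝔉 : Finset (Finset (TS β))) (αc : Finset (TS β) → TS β → Finset (Finset β)) :
    h (Wset 𝔉 αc) ≤ Cost 𝔉 αc + ∑ F ∈ 𝔉, R F := by
  classical
  by_contra hcon
  push_neg at hcon
  set W := Wset 𝔉 αc with hWdef
  set c₀ : ℝ := Cost 𝔉 αc + ∑ F ∈ 𝔉, R F with hc₀
  set h' : Finset β → ℝ := fun A => if A = W then c₀ else h A with hh'
  have hConstr' : Constr R h' := by
    intro ℬ 𝔉' αc'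
    by_cases hWB : W ∈ ℬ
    · have hsum : ∑ A ∈ ℬ, h' A = c₀ + ∑ A ∈ ℬ.erase W, h A := by
        rw [← Finset.sum_erase_add ℬ h' hWB]
        have h1 : h' W = c₀ := by simp [hh']
        have h2 : ∑ A ∈ ℬ.erase W, h' A = ∑ A ∈ ℬ.erase W, h A := by
          apply Finset.sum_congr rfl
          intro A hA
          simp only [hh']
          rw [if_neg (Finset.ne_of_mem_erase hA)]
        rw [h1, h2]; ring
      have hmerge := merge_bound hV hh (ℬ.erase W) 𝔉 𝔉' αc αc'
      have hsup : ℬ.sup id ∪ Wset 𝔉' αc' ⊆ (ℬ.erase W).sup id ∪ W ∪ Wset 𝔉' αc' := by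
        apply Finset.union_subset_union_left
        show ℬ.sup id ≤ (ℬ.erase W).sup id ∪ W
        apply Finset.sup_le
        intro A hA
        by_cases hAW : A = W
        · subst hAW
          intro x hx
          simp only [Finset.mem_union]
          exact Or.inr hx
        · refine le_trans (Finset.le_sup (f := id) (Finset.mem_erase.mpr ⟨hAW, hA⟩)) ?_
          exact Finset.subset_union_left
      have hb := bdel_mono hsup
      rw [hsum]
      linarith
    · have hsum : ∑ A ∈ ℬ, h' A = ∑ A ∈ ℬ, h A := by
        apply Finset.sum_congr rfl
        intro A hA
        rw [hh']
        simp only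
        rw [if_neg]
        rintro rfl
        exact hWB hA
      rw [hsum]
      exact hh ℬ 𝔉' αc'
  have hle : h' ≤ h := by
    intro A
    rw [hh']
    simp only
    by_cases hA : A = W
    · rw [if_pos hA, hA]
      exact le_of_lt hcon
    · rw [if_neg hA]
  have := hmin h' hConstr' hle W
  rw [hh'] at this
  simp at this
  linarith

/-- a minimal element of Constr is tight -/
lemma minimal_tight {h : Finset β → ℝ} (hh : Constr R h)
    (hmin : ∀ h' : Finset β → ℝ, Constr R h' → h' ≤ h → h ≤ h') :
    Tight h := by
  classical
  intro A₀ ε hε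
  by_contra hcon
  push_neg at hcon
  have hcon' : ∀ 𝒟 : Finset (Finset β), A₀ ∉ 𝒟 →
      bdel (A₀ ∪ 𝒟.sup id) - ∑ D ∈ 𝒟, h D < h A₀ - ε := by
    intro 𝒟 hmem
    exact hcon 𝒟 hmem
  set h' : Finset β → ℝ := fun A => if A = A₀ then h A₀ - ε else h A with hh'
  have hConstr' : Constr R h' := by
    intro ℬ 𝔉 αc
    by_cases hAB : A₀ ∈ ℬ
    · set ℬ' := ℬ.erase A₀ with hℬ'
      set W := Wset 𝔉 αc with hWdef
      have hsum : ∑ A ∈ ℬ, h' A = (h A₀ - ε) + ∑ A ∈ ℬ', h A := by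
        rw [← Finset.sum_erase_add ℬ h' hAB]
        have h1 : h' A₀ = h A₀ - ε := by simp [hh']
        have h2 : ∑ A ∈ ℬ.erase A₀, h' A = ∑ A ∈ ℬ', h A := by
          apply Finset.sum_congr rfl
          intro A hA
          simp only [hh']
          rw [if_neg (Finset.ne_of_mem_erase hA)]
        rw [h1, h2]; ring
      have hWle : h W ≤ Cost 𝔉 αc + ∑ F ∈ 𝔉, R F := minimal_W_le hV hh hmin 𝔉 αc
      have hBsup : ℬ.sup id = A₀ ∪ ℬ'.sup id := by
        apply le_antisymm
        · apply Finset.sup_le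
          intro A hA
          by_cases hAA : A = A₀
          · subst hAA
            exact Finset.subset_union_left
          · refine le_trans (Finset.le_sup (f := id) (Finset.mem_erase.mpr ⟨hAA, hA⟩)) ?_
            exact Finset.subset_union_right
        · apply Finset.union_subset
          · exact Finset.le_sup (f := id) hAB
          · show ℬ'.sup id ≤ ℬ.sup id
            refine Finset.sup_mono ?_
            intro x hx
            exact Finset.mem_of_mem_erase hx
      rw [hsum]
      by_cases hWB : W ∈ ℬ'
      · have hWsub : W ⊆ ℬ'.sup id := Finset.le_sup (f := id) hWB
        have hkey := hcon' ℬ' (Finset.notMem_erase _ _)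
        have hbd : bdel (ℬ.sup id ∪ W) ≤ bdel (A₀ ∪ ℬ'.sup id) := by
          apply bdel_mono
          rw [hBsup]
          intro x hx
          simp only [Finset.mem_union] at hx ⊢
          rcases hx with (hx | hx) | hx
          · exact Or.inl hx
          · exact Or.inr hx
          · exact Or.inr (hWsub hx)
        have hW0 : 0 ≤ h W := hh.nonneg W
        have hsplit : ∑ A ∈ ℬ', h A = h W + ∑ A ∈ ℬ'.erase W, h A := by
          rw [← Finset.sum_erase_add ℬ' h hWB]; ring
        have hrest : 0 ≤ ∑ A ∈ ℬ'.erase W, h A :=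
          Finset.sum_nonneg fun A _ => hh.nonneg A
        linarith
      · by_cases hWA : W = A₀
        · have hkey := hcon' ℬ' (Finset.notMem_erase _ _)
          have hbd : bdel (ℬ.sup id ∪ W) ≤ bdel (A₀ ∪ ℬ'.sup id) := by
            apply bdel_mono
            rw [hBsup, hWA]
            intro x hx
            simp only [Finset.mem_union] at hx ⊢
            tauto
          have hA0 : 0 ≤ h A₀ := hh.nonneg A₀
          rw [hWA] at hWle
          linarith
        · set 𝒟 := insert W ℬ' with h𝒟
          have hmem : A₀ ∉ 𝒟 := by
            rw [h𝒟]
            simp only [Finset.mem_insert]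
            push_neg
            exact ⟨fun hcontra => hWA hcontra.symm, Finset.notMem_erase _ _⟩
          have hkey := hcon' 𝒟 hmem
          have hsupD : 𝒟.sup id = W ∪ ℬ'.sup id := by
            rw [h𝒟, Finset.sup_insert, Finset.sup_eq_union]; rfl
          have hsumD : ∑ D ∈ 𝒟, h D = h W + ∑ A ∈ ℬ', h A := by
            rw [h𝒟, Finset.sum_insert hWB]
          rw [hsupD, hsumD] at hkey
          have hbd : bdel (ℬ.sup id ∪ W) ≤ bdel (A₀ ∪ (W ∪ ℬ'.sup id)) := by
            apply bdel_mono
            rw [hBsup]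
            intro x hx
            simp only [Finset.mem_union] at hx ⊢
            tauto
          linarith
    · have hsum : ∑ A ∈ ℬ, h' A = ∑ A ∈ ℬ, h A := by
        apply Finset.sum_congr rfl
        intro A hA
        rw [hh']
        simp only
        rw [if_neg]
        rintro rfl
        exact hAB hA
      rw [hsum]
      exact hh ℬ 𝔉 αc
  have hle : h' ≤ h := by
    intro A
    rw [hh']
    simp only
    by_cases hA : A = A₀
    · rw [if_pos hA, hA]; linarith
    · rw [if_neg hA]
  have := hmin h' hConstr' hle A₀
  rw [hh'] at this
  simp at this
  linarith

end Hyp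
end TS
end HypEx
namespace HypEx
set_option linter.unusedSectionVars false
set_option linter.unusedVariables false
set_option maxHeartbeats 1000000
variable {β : Type*} [DecidableEq β]
namespace TS

section Hyp2
variable {R : Finset (TS β) → ℝ}
variable (hV : ∀ 𝒢 : Finset (Finset (TS β)), ddelta (𝒢.sup id) ≤ ∑ F ∈ 𝒢, R F)

/-- on chains, finitely many pointwise approximations can be realized simultaneously -/
lemma chain_approx (c : Set (Finset β → ℝ)) (hc : IsChain (· ≤ ·) c) (hne : c.Nonempty)
    (g : Finset β → ℝ) (hg : ∀ h ∈ c, g ≤ h)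
    (hinf : ∀ A : Finset β, ∀ δ : ℝ, 0 < δ → ∃ h ∈ c, h A < g A + δ)
    (ℬ : Finset (Finset β)) (δ : ℝ) (hδ : 0 < δ) :
    ∃ h ∈ c, ∀ A ∈ ℬ, h A < g A + δ := by
  classical
  induction ℬ using Finset.induction_on with
  | empty =>
    obtain ⟨h, hh⟩ := hne
    exact ⟨h, hh, by simp⟩
  | @insert A ℬ' hA ih =>
    obtain ⟨h₁, hc₁, hprop₁⟩ := ih
    obtain ⟨h₂, hc₂, hprop₂⟩ := hinf A δ hδ
    rcases hc.total hc₁ hc₂ with hle | hle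
    · refine ⟨h₁, hc₁, ?_⟩
      intro X hX
      rcases Finset.mem_insert.mp hX with rfl | hX'
      · exact lt_of_le_of_lt (hle X) hprop₂
      · exact hprop₁ X hX'
    · refine ⟨h₂, hc₂, ?_⟩
      intro X hX
      rcases Finset.mem_insert.mp hX with rfl | hX'
      · exact hprop₂
      · exact lt_of_le_of_lt (hle X) (hprop₁ X hX')

include hV

/-- existence of a minimal element satisfying all constraints -/
lemma exists_minimal_constr :
    ∃ h : Finset β → ℝ, Constr R h ∧ ∀ h' : Finset β → ℝ, Constr R h' → h' ≤ h → h ≤ h' := by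
  classical
  -- Zorn in the dual order
  have hzorn := @zorn_le₀ ((Finset β → ℝ))ᵒᵈ _ {h : (Finset β → ℝ)ᵒᵈ | Constr R (OrderDual.ofDual h)} ?_
  · obtain ⟨m, hm⟩ := hzorn
    refine ⟨OrderDual.ofDual m, hm.prop, ?_⟩
    intro h' hh' hle
    have := hm.le_of_ge (y := OrderDual.toDual h') hh' hle
    exact this
  · -- chains have upper bounds in the dual order, i.e. lower bounds
    intro c hcs hchain
    rcases c.eq_empty_or_nonempty with rfl | hne
    · exact ⟨OrderDual.toDual (fun A => (A.card : ℝ)), constr_card hV, by simp⟩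
    · -- lower envelope of the chain
      set c' : Set (Finset β → ℝ) := OrderDual.ofDual '' c with hc'
      have hc'ne : c'.Nonempty := hne.image _
      have hc'chain : IsChain (· ≤ ·) c' := by
        intro x hx y hy hxy
        obtain ⟨x', hx', rfl⟩ := hx
        obtain ⟨y', hy', rfl⟩ := hy
        rcases hchain.total hx' hy' with hle | hle
        · exact Or.inr hle
        · exact Or.inl hle
      have hc'mem : ∀ h ∈ c', Constr R h := by
        rintro h ⟨h', hh', rfl⟩
        exact hcs hh'
      have hbdd : ∀ A : Finset β, BddBelow ((fun h => h A) '' c') := by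
        intro A
        refine ⟨bdel A, ?_⟩
        rintro x ⟨h, hh, rfl⟩
        exact (hc'mem h hh).bdel_le A
      set g : Finset β → ℝ := fun A => sInf ((fun h => h A) '' c') with hg
      have hgle : ∀ h ∈ c', g ≤ h := by
        intro h hh A
        exact csInf_le (hbdd A) ⟨h, hh, rfl⟩
      have hinf : ∀ A : Finset β, ∀ δ : ℝ, 0 < δ → ∃ h ∈ c', h A < g A + δ := by
        intro A δ hδ
        have h1 : sInf ((fun h => h A) '' c') < g A + δ := by
          have : g A = sInf ((fun h => h A) '' c') := rfl
          linarith
        obtain ⟨x, ⟨h, hh, rfl⟩, hx⟩ := exists_lt_of_csInf_lt (hc'ne.image _) h1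
        exact ⟨h, hh, hx⟩
      have hgconstr : Constr R g := by
        intro ℬ 𝔉 αc
        apply le_of_forall_pos_le_add
        intro ε hε
        set δ := ε / (ℬ.card + 1) with hδdef
        have hδ : 0 < δ := by positivity
        obtain ⟨h, hh, hprop⟩ := chain_approx c' hc'chain hc'ne g hgle hinf ℬ δ hδ
        have h1 := hc'mem h hh ℬ 𝔉 αc
        have h2 : ∑ A ∈ ℬ, h A ≤ ∑ A ∈ ℬ, g A + ℬ.card * δ := by
          calc ∑ A ∈ ℬ, h A ≤ ∑ A ∈ ℬ, (g A + δ) :=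
                Finset.sum_le_sum (fun A hA => le_of_lt (hprop A hA))
            _ = ∑ A ∈ ℬ, g A + ℬ.card * δ := by
                rw [Finset.sum_add_distrib, Finset.sum_const, nsmul_eq_mul]
        have h3 : (ℬ.card : ℝ) * δ ≤ ε := by
          rw [hδdef]
          rw [div_eq_inv_mul, ← mul_assoc]
          have hpos : (0:ℝ) < (ℬ.card : ℝ) + 1 := by positivity
          have : (ℬ.card : ℝ) * ((ℬ.card : ℝ) + 1)⁻¹ ≤ 1 := by
            rw [mul_inv_le_iff₀ hpos]
            linarith
          nlinarith [le_of_lt hε]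
        linarith
      refine ⟨OrderDual.toDual g, hgconstr, ?_⟩
      intro z hz
      show g ≤ OrderDual.ofDual z
      exact hgle _ ⟨z, hz, rfl⟩

omit hV in
/-- the tight span diversity is hyperconvex -/
theorem tdiv_hyperconvex : (TDiv β).Hyperconvex := by
  intro R hR0 hV
  obtain ⟨h, hConstr, hmin⟩ := exists_minimal_constr (R := R) hV
  set z : TS β := ⟨h, hConstr.adm, minimal_tight hV hConstr hmin⟩ with hz
  refine ⟨z, ?_⟩
  intro Y
  show ddelta (insert z Y) ≤ R Y
  by_cases hzY : z ∈ Y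
  · rw [Finset.insert_eq_self.mpr hzY]
    exact ddelta_le_R hV Y
  · apply ddelta_le
    intro α
    unfold dval
    rw [Finset.sup_insert, Finset.sum_insert hzY]
    have hkey := hConstr (α z) {Y} (fun F p => α p)
    have hW : Wset {Y} (fun F p => α p) = Y.sup (fun p => (α p).sup id) := by
      unfold Wset
      rw [Finset.sup_singleton]
    have hC : Cost {Y} (fun F p => α p) = ∑ p ∈ Y, ∑ A ∈ α p, p.1 A := by
      unfold Cost
      rw [Finset.sum_singleton]
    have hRS : ∑ F ∈ ({Y} : Finset (Finset (TS β))), R F = R Y := Finset.sum_singleton _ _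
    rw [hW, hC, hRS] at hkey
    have hzval : ∀ A, z.1 A = h A := fun A => rfl
    have hsum : ∑ A ∈ α z, z.1 A = ∑ A ∈ α z, h A := rfl
    rw [hsum]
    have heq : (α z).sup id ∪ Y.sup (fun p => (α p).sup id)
        = (α z).sup id ⊔ Y.sup (fun p => (α p).sup id) := rfl
    rw [← heq] at *
    linarith

end Hyp2
end TS
end HypEx
namespace HypEx
set_option linter.unusedSectionVars false
set_option linter.unusedVariables false
set_option maxHeartbeats 1000000

section SmallLemmas
variable {β : Type*} [DecidableEq β]

lemma card_sup_le' {γ : Type*} [DecidableEq γ] (𝒟 : Finset γ) (f : γ → Finset β) :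
    (((𝒟.sup f)).card : ℝ) ≤ ∑ D ∈ 𝒟, ((f D).card : ℝ) := by
  induction 𝒟 using Finset.induction_on with
  | empty => simp
  | @insert D 𝒟' hD ih =>
    rw [Finset.sup_insert, Finset.sum_insert hD]
    have : (((f D ⊔ 𝒟'.sup f)).card : ℝ) ≤ ((f D).card : ℝ) + ((𝒟'.sup f).card : ℝ) := by
      exact_mod_cast Finset.card_union_le (f D) (𝒟'.sup f)
    linarith

lemma filter_sup {γ : Type*} [DecidableEq γ] (𝒟 : Finset γ) (f : γ → Finset β)
    (P : β → Prop) [DecidablePred P] :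
    (𝒟.sup f).filter P = 𝒟.sup (fun D => (f D).filter P) := by
  ext x
  simp only [Finset.mem_filter, Finset.mem_sup]
  tauto

lemma bdel_filter_split (X : Finset β) (P : β → Prop) [DecidablePred P] :
    bdel X ≤ bdel (X.filter P) + ((X.filter (fun x => ¬ P x)).card : ℝ) := by
  have hcard : X.card = (X.filter P).card + (X.filter (fun x => ¬ P x)).card :=
    (Finset.card_filter_add_card_filter_not (s := X) P).symm
  unfold bdel
  have h2 : (0:ℝ) ≤ ((X.filter (fun x => ¬ P x)).card : ℝ) := by positivity
  apply max_le
  · have : (X.card : ℝ) = ((X.filter P).card : ℝ) + ((X.filter (fun x => ¬ P x)).card : ℝ) := by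
      exact_mod_cast hcard
    have h3 : ((X.filter P).card : ℝ) - 1 ≤ max (((X.filter P).card : ℝ) - 1) 0 := le_max_left _ _
    linarith
  · have h3 : (0:ℝ) ≤ max (((X.filter P).card : ℝ) - 1) 0 := le_max_right _ _
    linarith

lemma bdel_eq_filter_add (X : Finset β) (P : β → Prop) [DecidablePred P]
    (h : (X.filter P).Nonempty) :
    bdel X = ((X.filter (fun x => ¬ P x)).card : ℝ) + bdel (X.filter P) := by
  have hcard : X.card = (X.filter P).card + (X.filter (fun x => ¬ P x)).card :=
    (Finset.card_filter_add_card_filter_not (s := X) P).symm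
  have hXne : X.Nonempty := by
    obtain ⟨x, hx⟩ := h
    exact ⟨x, (Finset.mem_filter.mp hx).1⟩
  rw [bdel_eq_of_nonempty hXne, bdel_eq_of_nonempty h]
  have : (X.card : ℝ) = ((X.filter P).card : ℝ) + ((X.filter (fun x => ¬ P x)).card : ℝ) := by
    exact_mod_cast hcard
  linarith

end SmallLemmas

/-! the tail structure on ℕ -/

noncomputable def hcard (n : ℕ) (A : Finset ℕ) : ℝ := ((A.filter (fun k => ¬ n ≤ k)).card : ℝ)

lemma hcard_nonneg (n : ℕ) (A : Finset ℕ) : 0 ≤ hcard n A := by unfold hcard; positivity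

/-- the decreasing sets: profiles supported on the tail {k | n ≤ k} -/
def Sset (n : ℕ) : Set (TS ℕ) :=
  {p | ∀ A : Finset ℕ, p.1 A = p.1 (A.filter (fun k => n ≤ k)) + hcard n A}

lemma Sset_antitone (n : ℕ) : Sset (n + 1) ⊆ Sset n := by
  intro p hp
  intro A
  have h1 := hp A
  have h2 := hp (A.filter (fun k => n ≤ k))
  have hff : (A.filter (fun k => n ≤ k)).filter (fun k => n + 1 ≤ k)
      = A.filter (fun k => n + 1 ≤ k) := by
    rw [Finset.filter_filter]
    apply Finset.filter_congr
    intro k _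
    constructor
    · rintro ⟨_, h⟩; exact h
    · intro h; exact ⟨by omega, h⟩
  have hcards : hcard (n+1) A = hcard n A + hcard (n+1) (A.filter (fun k => n ≤ k)) := by
    unfold hcard
    rw [Finset.filter_filter]
    have hsplit : A.filter (fun k => ¬ (n+1) ≤ k) =
        A.filter (fun k => ¬ n ≤ k) ∪ A.filter (fun k => n ≤ k ∧ ¬ (n+1) ≤ k) := by
      ext k
      simp only [Finset.mem_filter, Finset.mem_union]
      constructor
      · rintro ⟨hk, hle⟩
        by_cases hn : n ≤ k
        · exact Or.inr ⟨hk, hn, hle⟩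
        · exact Or.inl ⟨hk, hn⟩
      · rintro (⟨hk, hn⟩ | ⟨hk, _, hle⟩)
        · exact ⟨hk, by omega⟩
        · exact ⟨hk, hle⟩
    have hdisj : Disjoint (A.filter (fun k => ¬ n ≤ k))
        (A.filter (fun k => n ≤ k ∧ ¬ (n+1) ≤ k)) := by
      rw [Finset.disjoint_left]
      intro k hk1 hk2
      simp only [Finset.mem_filter] at hk1 hk2
      exact hk1.2 hk2.2.1
    rw [hsplit, Finset.card_union_of_disjoint hdisj]
    push_cast
    ring
  rw [hff] at h2
  linarith

lemma Sset_inter_empty : (⋂ n : ℕ, Sset n) = ∅ := by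
  rw [Set.eq_empty_iff_forall_notMem]
  intro p hp
  simp only [Set.mem_iInter] at hp
  -- p is the "card" profile
  have hcardprof : ∀ A : Finset ℕ, p.1 A = (A.card : ℝ) := by
    intro A
    set n : ℕ := A.sup id + 1 with hn
    have hfilt : A.filter (fun k => n ≤ k) = ∅ := by
      rw [Finset.filter_eq_empty_iff]
      intro k hk
      have : k ≤ A.sup id := Finset.le_sup (f := id) hk
      omega
    have hfilt2 : A.filter (fun k => ¬ n ≤ k) = A := by
      rw [Finset.filter_eq_self]
      intro k hk
      have : k ≤ A.sup id := Finset.le_sup (f := id) hk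
      omega
    have := hp n A
    rw [hfilt] at this
    rw [TS.empty_eq_zero p] at this
    unfold hcard at this
    rw [hfilt2] at this
    linarith
  -- but the card profile is not tight at {0}
  obtain ⟨𝒟, hmem, hkey⟩ := p.tight {0} (1/2) (by norm_num)
  rw [hcardprof] at hkey
  have hsum : ∑ D ∈ 𝒟, p.1 D = ∑ D ∈ 𝒟, (D.card : ℝ) :=
    Finset.sum_congr rfl fun D _ => hcardprof D
  rw [hsum] at hkey
  have h1 : bdel ({0} ∪ 𝒟.sup id) ≤ ((𝒟.sup id).card : ℝ) := by
    unfold bdel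
    apply max_le
    · have : ({0} ∪ 𝒟.sup id).card ≤ 1 + (𝒟.sup id).card := by
        apply le_trans (Finset.card_union_le _ _)
        simp
      have : (({0} ∪ 𝒟.sup id).card : ℝ) ≤ 1 + ((𝒟.sup id).card : ℝ) := by exact_mod_cast this
      linarith
    · positivity
  have h2 := card_sup_le' 𝒟 id
  simp only [Finset.card_singleton, Nat.cast_one, id] at hkey h2
  have h3 : ∑ D ∈ 𝒟, ((id D).card : ℝ) = ∑ D ∈ 𝒟, ((D).card : ℝ) := rfl
  linarith

end HypEx
namespace HypEx
set_option linter.unusedSectionVars false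
set_option linter.unusedVariables false
set_option maxHeartbeats 1000000

/-! the tail subtype and up/down transfer -/

def Tau (n : ℕ) : Type := {k : ℕ // n ≤ k}

instance (n : ℕ) : DecidableEq (Tau n) := fun a b =>
  decidable_of_iff (a.1 = b.1) Subtype.ext_iff.symm

def upEmb (n : ℕ) : Tau n ↪ ℕ := ⟨Subtype.val, Subtype.val_injective⟩

def up {n : ℕ} (B : Finset (Tau n)) : Finset ℕ := B.map (upEmb n)

def down (n : ℕ) (A : Finset ℕ) : Finset (Tau n) := A.subtype (fun k => n ≤ k)

variable {n : ℕ}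

lemma mem_up {B : Finset (Tau n)} {k : ℕ} : k ∈ up B ↔ ∃ h : n ≤ k, (⟨k, h⟩ : Tau n) ∈ B := by
  unfold up upEmb
  simp only [Finset.mem_map, Function.Embedding.coeFn_mk]
  constructor
  · rintro ⟨a, ha, rfl⟩
    exact ⟨a.2, ha⟩
  · rintro ⟨h, hmem⟩
    exact ⟨⟨k, h⟩, hmem, rfl⟩

lemma mem_down {A : Finset ℕ} {a : Tau n} : a ∈ down n A ↔ a.1 ∈ A := by
  unfold down
  exact Finset.mem_subtype

lemma up_card (B : Finset (Tau n)) : (up B).card = B.card := Finset.card_map _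

lemma up_injective : Function.Injective (up (n := n)) := by
  intro B₁ B₂ h
  ext a
  have := Finset.ext_iff.mp h a.1
  simp only [mem_up] at this
  constructor
  · intro ha
    obtain ⟨h', hmem⟩ := this.mp ⟨a.2, ha⟩
    exact hmem
  · intro ha
    obtain ⟨h', hmem⟩ := this.mpr ⟨a.2, ha⟩
    exact hmem

lemma down_up (B : Finset (Tau n)) : down n (up B) = B := by
  ext a
  rw [mem_down, mem_up]
  constructor
  · rintro ⟨h, hmem⟩
    exact hmem
  · intro ha
    exact ⟨a.2, ha⟩

lemma up_down (A : Finset ℕ) : up (down n A) = A.filter (fun k => n ≤ k) := by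
  ext k
  rw [mem_up]
  simp only [Finset.mem_filter]
  constructor
  · rintro ⟨h, hmem⟩; exact ⟨mem_down.mp hmem, h⟩
  · rintro ⟨hk, h⟩; exact ⟨h, mem_down.mpr hk⟩

lemma up_union (B₁ B₂ : Finset (Tau n)) : up (B₁ ∪ B₂) = up B₁ ∪ up B₂ := by
  unfold up; exact Finset.map_union _ _

lemma down_union (A₁ A₂ : Finset ℕ) :
    down n (A₁ ∪ A₂) = down n A₁ ∪ down n A₂ := by
  ext a; simp only [mem_down, Finset.mem_union]

lemma up_sup (ℰ : Finset (Finset (Tau n))) : up (ℰ.sup id) = ℰ.sup (fun E => up E) := by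
  induction ℰ using Finset.induction_on with
  | empty => simp [up]
  | @insert E ℰ' hE ih =>
    rw [Finset.sup_insert, Finset.sup_insert, ← ih]
    show up (E ∪ ℰ'.sup id) = up E ∪ up (ℰ'.sup id)
    exact up_union _ _

lemma down_empty : down n ∅ = ∅ := rfl

lemma down_sup (𝒟 : Finset (Finset ℕ)) :
    down n (𝒟.sup id) = 𝒟.sup (fun D => down n D) := by
  induction 𝒟 using Finset.induction_on with
  | empty => simp [down_empty]
  | @insert D 𝒟' hD ih =>
    rw [Finset.sup_insert, Finset.sup_insert, ← ih]
    show down n (D ∪ 𝒟'.sup id) = down n D ∪ down n (𝒟'.sup id)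
    exact down_union _ _

lemma bdel_up (B : Finset (Tau n)) : bdel (up B) = bdel B := by
  unfold bdel; rw [up_card]

lemma up_tail (B : Finset (Tau n)) : (up B).filter (fun k => n ≤ k) = up B := by
  rw [Finset.filter_eq_self]
  intro k hk
  rw [mem_up] at hk
  exact hk.1

lemma up_nohead (B : Finset (Tau n)) : (up B).filter (fun k => ¬ n ≤ k) = ∅ := by
  rw [Finset.filter_eq_empty_iff]
  intro k hk
  rw [mem_up] at hk
  intro hneg
  exact hneg hk.1

lemma hcard_up (B : Finset (Tau n)) : hcard n (up B) = 0 := by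
  unfold hcard; rw [up_nohead]; simp

lemma down_filter (A : Finset ℕ) :
    down n (A.filter (fun k => n ≤ k)) = down n A := by
  ext a
  simp only [mem_down, Finset.mem_filter]
  exact ⟨fun h => h.1, fun h => ⟨h, a.2⟩⟩

/-! transfer of profiles -/

section Transfer
variable {n : ℕ}

/-- the profile on the tail subtype induced by p ∈ Sset n -/
noncomputable def phiProf (p : TS ℕ) : Finset (Tau n) → ℝ := fun B => p.1 (up B)

lemma phiProf_adm (p : TS ℕ) : Adm (phiProf (n := n) p) := by
  intro ℰ
  unfold phiProf
  have hsum : ∑ E ∈ ℰ, p.1 (up E) = ∑ A ∈ ℰ.image up, p.1 A := by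
    rw [Finset.sum_image (fun x hx y hy h => up_injective h)]
  rw [hsum]
  have h1 := p.adm (ℰ.image up)
  have h2 : (ℰ.image up).sup id = up (ℰ.sup id) := by
    rw [Finset.sup_image, up_sup]; rfl
  rw [h2, bdel_up] at h1
  exact h1

lemma phiProf_tight (p : TS ℕ) (hp : p ∈ Sset n) : Tight (phiProf (n := n) p) := by
  intro B₀ ε hε
  set A₀ := up B₀ with hA₀
  obtain ⟨𝒟, hmem, hkey⟩ := p.tight A₀ ε hε
  -- collapse the realization family to tail sets
  set ℰ' : Finset (Finset ℕ) := 𝒟.image (fun D => D.filter (fun k => n ≤ k)) with hℰ'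
  have step1 : p.1 A₀ - ε ≤ bdel (A₀ ∪ ℰ'.sup id) - ∑ E ∈ ℰ', p.1 E := by
    have hsplit : ∀ D ∈ 𝒟, p.1 D = p.1 (D.filter (fun k => n ≤ k)) + hcard n D := fun D _ => hp D
    have hsum1 : ∑ D ∈ 𝒟, p.1 D
        = ∑ D ∈ 𝒟, p.1 (D.filter (fun k => n ≤ k)) + ∑ D ∈ 𝒟, hcard n D := by
      rw [← Finset.sum_add_distrib]
      exact Finset.sum_congr rfl hsplit
    have hsum2 : ∑ E ∈ ℰ', p.1 E ≤ ∑ D ∈ 𝒟, p.1 (D.filter (fun k => n ≤ k)) := by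
      rw [hℰ']
      exact sum_image_le 𝒟 _ _ (fun A => p.nonneg A)
    have hsupf : ℰ'.sup id = (𝒟.sup id).filter (fun k => n ≤ k) := by
      rw [hℰ', Finset.sup_image, filter_sup]
      rfl
    have hbd : bdel (A₀ ∪ 𝒟.sup id) ≤ bdel (A₀ ∪ ℰ'.sup id) + ∑ D ∈ 𝒟, hcard n D := by
      have h1 : bdel (A₀ ∪ 𝒟.sup id) ≤ bdel ((A₀ ∪ 𝒟.sup id).filter (fun k => n ≤ k))
          + (((A₀ ∪ 𝒟.sup id).filter (fun k => ¬ n ≤ k)).card : ℝ) :=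
        bdel_filter_split _ _
      have h2 : (A₀ ∪ 𝒟.sup id).filter (fun k => n ≤ k)
          = A₀ ∪ (𝒟.sup id).filter (fun k => n ≤ k) := by
        rw [Finset.filter_union]
        rw [hA₀, up_tail]
      have h3 : (A₀ ∪ 𝒟.sup id).filter (fun k => ¬ n ≤ k)
          = (𝒟.sup id).filter (fun k => ¬ n ≤ k) := by
        rw [Finset.filter_union]
        rw [hA₀, up_nohead, Finset.empty_union]
      have h4 : (((𝒟.sup id).filter (fun k => ¬ n ≤ k)).card : ℝ) ≤ ∑ D ∈ 𝒟, hcard n D := by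
        rw [filter_sup 𝒟 id (fun k => ¬ n ≤ k)]
        unfold hcard
        exact card_sup_le' 𝒟 _
      rw [h2, h3] at h1
      rw [hsupf]
      linarith
    linarith
  by_cases hA₀ℰ : A₀ ∈ ℰ'
  · -- degenerate: realization value is nonpositive, use the empty family
    refine ⟨∅, Finset.notMem_empty _, ?_⟩
    have hadm := p.adm ℰ'
    have hsub : A₀ ≤ ℰ'.sup id := Finset.le_sup (f := id) hA₀ℰ
    have hun : A₀ ∪ ℰ'.sup id = ℰ'.sup id := Finset.union_eq_right.mpr hsub
    rw [hun] at step1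
    have : p.1 A₀ - ε ≤ 0 := by linarith
    have hb : (0:ℝ) ≤ bdel (B₀ ∪ (∅ : Finset (Finset (Tau n))).sup id) := bdel_nonneg _
    have hval : phiProf (n := n) p B₀ = p.1 A₀ := rfl
    rw [hval]
    simp only [Finset.sum_empty, sub_zero]
    linarith
  · -- lift the family to the subtype
    set ℰ : Finset (Finset (Tau n)) := ℰ'.image (down n) with hℰ
    have htail : ∀ E ∈ ℰ', E.filter (fun k => n ≤ k) = E := by
      intro E hE
      rw [hℰ'] at hE
      obtain ⟨D, hD, rfl⟩ := Finset.mem_image.mp hE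
      rw [Finset.filter_filter]
      apply Finset.filter_congr
      intro k _
      tauto
    have hinj : ∀ E₁ ∈ ℰ', ∀ E₂ ∈ ℰ', down n E₁ = down n E₂ → E₁ = E₂ := by
      intro E₁ h₁ E₂ h₂ heq
      have := congrArg up heq
      rw [up_down, up_down, htail E₁ h₁, htail E₂ h₂] at this
      exact this
    refine ⟨ℰ, ?_, ?_⟩
    · intro hB₀
      rw [hℰ] at hB₀
      obtain ⟨E, hE, hEeq⟩ := Finset.mem_image.mp hB₀
      have := congrArg up hEeq
      rw [up_down, htail E hE] at this
      rw [← hA₀] at this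
      rw [this] at hE
      exact hA₀ℰ hE
    · have hsumE : ∑ E ∈ ℰ, phiProf (n := n) p E = ∑ E ∈ ℰ', p.1 E := by
        rw [hℰ, Finset.sum_image hinj]
        apply Finset.sum_congr rfl
        intro E hE
        unfold phiProf
        rw [up_down, htail E hE]
      have hsupE : up (B₀ ∪ ℰ.sup id) = A₀ ∪ ℰ'.sup id := by
        rw [up_union, hℰ]
        congr 1
        rw [up_sup, Finset.sup_image]
        have : ((fun E => up E) ∘ (down n)) = fun E : Finset ℕ => up (down n E) := rfl
        rw [this]
        apply le_antisymm
        · apply Finset.sup_le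
          intro E hE
          rw [up_down, htail E hE]
          exact Finset.le_sup (f := id) hE
        · apply Finset.sup_le
          intro E hE
          rw [← htail E hE, ← up_down]
          exact Finset.le_sup (f := fun E => up (down n E)) hE
      have hbE : bdel (B₀ ∪ ℰ.sup id) = bdel (A₀ ∪ ℰ'.sup id) := by
        rw [← hsupE, bdel_up]
      have hval : phiProf (n := n) p B₀ = p.1 A₀ := rfl
      rw [hval, hsumE, hbE]
      exact step1

/-- extension of a tail profile to the whole space -/
noncomputable def psiProf (q : TS (Tau n)) : Finset ℕ → ℝ := fun A => q.1 (down n A) + hcard n A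

lemma psiProf_adm (q : TS (Tau n)) : Adm (psiProf (n := n) q) := by
  intro 𝒜
  unfold psiProf
  rw [Finset.sum_add_distrib]
  have h1 : ∑ A ∈ 𝒜, q.1 (down n A) ≥ bdel ((𝒜.sup id).filter (fun k => n ≤ k)) := by
    have hsum : ∑ E ∈ 𝒜.image (down n), q.1 E ≤ ∑ A ∈ 𝒜, q.1 (down n A) :=
      sum_image_le 𝒜 _ _ (fun E => q.nonneg E)
    have hadm := q.adm (𝒜.image (down n))
    have hsup : (𝒜.image (down n)).sup id = down n (𝒜.sup id) := by
      rw [Finset.sup_image, down_sup]; rfl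
    rw [hsup] at hadm
    have hb : bdel (down n (𝒜.sup id)) = bdel ((𝒜.sup id).filter (fun k => n ≤ k)) := by
      rw [← bdel_up, up_down]
    rw [hb] at hadm
    linarith
  have h2 : hcard n (𝒜.sup id) ≤ ∑ A ∈ 𝒜, hcard n A := by
    unfold hcard
    rw [filter_sup 𝒜 id (fun k => ¬ n ≤ k)]
    exact card_sup_le' 𝒜 _
  have h3 := bdel_filter_split (𝒜.sup id) (fun k => n ≤ k)
  unfold hcard at h2 ⊢
  linarith

lemma psiProf_sprop (q : TS (Tau n)) (A : Finset ℕ) :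
    psiProf (n := n) q A = psiProf (n := n) q (A.filter (fun k => n ≤ k)) + hcard n A := by
  unfold psiProf
  rw [down_filter]
  have h0 : hcard n (A.filter (fun k => n ≤ k)) = 0 := by
    unfold hcard
    rw [Finset.filter_filter]
    have : A.filter (fun k => n ≤ k ∧ ¬ n ≤ k) = ∅ := by
      rw [Finset.filter_eq_empty_iff]
      intro k _
      tauto
    rw [this]; simp
  rw [h0]
  ring

lemma psiProf_tight (q : TS (Tau n)) : Tight (psiProf (n := n) q) := by
  intro A₀ ε hε
  set B₀ : Finset (Tau n) := down n A₀ with hB₀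
  obtain ⟨ℰ, hmem, hkey⟩ := q.tight B₀ ε hε
  by_cases hne : (B₀ ∪ ℰ.sup id).Nonempty
  · -- main case: lift the subtype family via `up`
    set 𝒟 : Finset (Finset ℕ) := ℰ.image up with h𝒟
    refine ⟨𝒟, ?_, ?_⟩
    · intro hA₀
      rw [h𝒟] at hA₀
      obtain ⟨E, hE, hEeq⟩ := Finset.mem_image.mp hA₀
      have hd : down n (up E) = down n A₀ := by rw [hEeq]
      rw [down_up] at hd
      rw [hd] at hE
      exact hmem hE
    · have hsum : ∑ D ∈ 𝒟, psiProf (n := n) q D = ∑ E ∈ ℰ, q.1 E := by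
        rw [h𝒟, Finset.sum_image (fun x hx y hy h => up_injective h)]
        apply Finset.sum_congr rfl
        intro E _
        unfold psiProf
        rw [down_up, hcard_up]
        ring
      have hsupD : 𝒟.sup id = up (ℰ.sup id) := by
        rw [h𝒟, Finset.sup_image, up_sup]; rfl
      have hfilteq : (A₀ ∪ 𝒟.sup id).filter (fun k => n ≤ k) = up (B₀ ∪ ℰ.sup id) := by
        rw [Finset.filter_union, hsupD, up_tail, up_union, up_down]
      have hhc : (A₀ ∪ 𝒟.sup id).filter (fun k => ¬ n ≤ k) = A₀.filter (fun k => ¬ n ≤ k) := by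
        rw [Finset.filter_union, hsupD, up_nohead, Finset.union_empty]
      have hfne : ((A₀ ∪ 𝒟.sup id).filter (fun k => n ≤ k)).Nonempty := by
        rw [hfilteq]
        obtain ⟨b, hb⟩ := hne
        exact ⟨b.1, mem_up.mpr ⟨b.2, by exact hb⟩⟩
      have hbsplit := bdel_eq_filter_add (A₀ ∪ 𝒟.sup id) (fun k => n ≤ k) hfne
      rw [hfilteq, hhc] at hbsplit
      rw [bdel_up] at hbsplit
      have hval : psiProf (n := n) q A₀ = q.1 B₀ + hcard n A₀ := rfl
      rw [hval, hsum, hbsplit]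
      unfold hcard
      linarith
  · -- degenerate case : B₀ and the realization are empty
    rw [Finset.not_nonempty_iff_eq_empty, Finset.union_eq_empty] at hne
    obtain ⟨hB₀e, hℰe⟩ := hne
    have hq0 : q.1 B₀ = 0 := by rw [hB₀e]; exact TS.empty_eq_zero q
    rcases A₀.eq_empty_or_nonempty with rfl | hA₀ne
    · refine ⟨∅, Finset.notMem_empty _, ?_⟩
      have : psiProf (n := n) q ∅ = 0 := by
        unfold psiProf
        have : down n ∅ = ∅ := rfl
        rw [this, TS.empty_eq_zero q]
        unfold hcard; simp
      rw [this]
      simp only [Finset.sum_empty, sub_zero]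
      have := bdel_nonneg ((∅ : Finset ℕ) ∪ (∅ : Finset (Finset ℕ)).sup id)
      linarith
    · -- A₀ is nonempty and consists only of head elements
      set E₀ : Finset (Tau n) := {⟨n, le_refl n⟩} with hE₀
      obtain ⟨ℰ₂, hmem₂, hkey₂⟩ := q.tight E₀ ε hε
      set 𝒟 : Finset (Finset ℕ) := (insert E₀ ℰ₂).image up with h𝒟
      refine ⟨𝒟, ?_, ?_⟩
      · intro hA₀
        rw [h𝒟] at hA₀
        obtain ⟨E, hE, hEeq⟩ := Finset.mem_image.mp hA₀
        have hd : down n (up E) = down n A₀ := by rw [hEeq]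
        rw [down_up, ← hB₀, hB₀e] at hd
        rw [hd] at hEeq
        have : up (∅ : Finset (Tau n)) = (∅ : Finset ℕ) := rfl
        rw [this] at hEeq
        rw [← hEeq] at hA₀ne
        exact Finset.not_nonempty_empty hA₀ne
      · have hsum : ∑ D ∈ 𝒟, psiProf (n := n) q D = ∑ E ∈ insert E₀ ℰ₂, q.1 E := by
          rw [h𝒟, Finset.sum_image (fun x hx y hy h => up_injective h)]
          apply Finset.sum_congr rfl
          intro E _
          unfold psiProf
          rw [down_up, hcard_up]
          ring
        have hsum2 : ∑ E ∈ insert E₀ ℰ₂, q.1 E = q.1 E₀ + ∑ E ∈ ℰ₂, q.1 E := by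
          rw [Finset.sum_insert hmem₂]
        have hsupD : 𝒟.sup id = up (E₀ ∪ ℰ₂.sup id) := by
          rw [h𝒟, Finset.sup_image, up_union, up_sup, Finset.sup_insert]
          rfl
        have hfilteq : (A₀ ∪ 𝒟.sup id).filter (fun k => n ≤ k) = up (E₀ ∪ ℰ₂.sup id) := by
          rw [Finset.filter_union, hsupD, up_tail]
          have hA₀f : A₀.filter (fun k => n ≤ k) = ∅ := by
            have := congrArg up hB₀e.symm
            rw [up_down] at this
            have h2 : up (n := n) ∅ = ∅ := rfl
            rw [← this, h2]
          rw [hA₀f, Finset.empty_union]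
        have hhc : (A₀ ∪ 𝒟.sup id).filter (fun k => ¬ n ≤ k) = A₀.filter (fun k => ¬ n ≤ k) := by
          rw [Finset.filter_union, hsupD, up_nohead, Finset.union_empty]
        have hfne : ((A₀ ∪ 𝒟.sup id).filter (fun k => n ≤ k)).Nonempty := by
          rw [hfilteq]
          refine ⟨n, mem_up.mpr ⟨le_refl n, ?_⟩⟩
          exact Finset.mem_union_left _ (Finset.mem_singleton_self _)
        have hbsplit := bdel_eq_filter_add (A₀ ∪ 𝒟.sup id) (fun k => n ≤ k) hfne
        rw [hfilteq, hhc] at hbsplit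
        rw [bdel_up] at hbsplit
        have hval : psiProf (n := n) q A₀ = q.1 B₀ + hcard n A₀ := rfl
        rw [hval, hsum, hsum2, hbsplit, hq0]
        unfold hcard
        have hE₀sub : E₀ ≤ E₀ ∪ ℰ₂.sup id := Finset.subset_union_left
        have hkey₂' : q.1 E₀ - ε ≤ bdel (E₀ ∪ ℰ₂.sup id) - ∑ E ∈ ℰ₂, q.1 E := hkey₂
        linarith
end Transfer
end HypEx
namespace HypEx
set_option linter.unusedSectionVars false
set_option linter.unusedVariables false
set_option maxHeartbeats 1000000

variable {n : ℕ}

lemma up_sup' {γ : Type*} [DecidableEq γ] (s : Finset γ) (f : γ → Finset (Tau n)) :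
    up (s.sup f) = s.sup (fun x => up (f x)) := by
  induction s using Finset.induction_on with
  | empty => simp [up]
  | @insert x s' hx ih =>
    rw [Finset.sup_insert, Finset.sup_insert, ← ih]
    show up (f x ∪ s'.sup f) = up (f x) ∪ up (s'.sup f)
    exact up_union _ _

lemma down_sup' {γ : Type*} [DecidableEq γ] (s : Finset γ) (f : γ → Finset ℕ) :
    down n (s.sup f) = s.sup (fun x => down n (f x)) := by
  induction s using Finset.induction_on with
  | empty => simp [down_empty]
  | @insert x s' hx ih =>
    rw [Finset.sup_insert, Finset.sup_insert, ← ih]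
    show down n (f x ∪ s'.sup f) = down n (f x) ∪ down n (s'.sup f)
    exact down_union _ _

lemma bdel_down (A : Finset ℕ) : bdel (down n A) = bdel (A.filter (fun k => n ≤ k)) := by
  rw [← bdel_up, up_down]

/-- the isomorphism between profiles supported on a tail and tail-subtype profiles -/
noncomputable def Phi (n : ℕ) (p : ↥(Sset n)) : TS (Tau n) :=
  ⟨phiProf p.1, phiProf_adm p.1, phiProf_tight p.1 p.2⟩

noncomputable def Psi (n : ℕ) (q : TS (Tau n)) : ↥(Sset n) :=
  ⟨⟨psiProf q, psiProf_adm q, psiProf_tight q⟩, fun A => psiProf_sprop q A⟩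

lemma Psi_Phi (p : ↥(Sset n)) : Psi n (Phi n p) = p := by
  apply Subtype.ext
  apply Subtype.ext
  funext A
  show phiProf p.1 (down n A) + hcard n A = p.1.1 A
  unfold phiProf
  rw [up_down]
  exact (p.2 A).symm

lemma Phi_Psi (q : TS (Tau n)) : Phi n (Psi n q) = q := by
  apply Subtype.ext
  funext B
  show psiProf q (up B) = q.1 B
  unfold psiProf
  rw [down_up, hcard_up]
  ring

lemma Phi_injective : Function.Injective (Phi n) := by
  intro p₁ p₂ h
  have := congrArg (Psi n) h
  rwa [Psi_Phi, Psi_Phi] at this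

lemma Psi_injective : Function.Injective (Psi n) := by
  intro q₁ q₂ h
  have := congrArg (Phi n) h
  rwa [Phi_Psi, Phi_Psi] at this

lemma filter_eq_singleton {γ δ : Type*} [DecidableEq γ] [DecidableEq δ]
    {F : Finset γ} {φ : γ → δ} (hinj : Function.Injective φ) {p : γ} (hp : p ∈ F) :
    F.filter (fun x => φ x = φ p) = {p} := by
  ext x
  simp only [Finset.mem_filter, Finset.mem_singleton]
  constructor
  · rintro ⟨_, h⟩; exact hinj h
  · rintro rfl; exact ⟨hp, rfl⟩

/-- the diversity values agree along the isomorphism -/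
lemma delta_pres (n : ℕ) (F : Finset ↥(Sset n)) :
    TS.ddelta (F.image Subtype.val) = TS.ddelta (F.image (Phi n)) := by
  classical
  have hvalinj : Function.Injective (Subtype.val : ↥(Sset n) → TS ℕ) := Subtype.val_injective
  apply le_antisymm
  · apply TS.ddelta_le
    intro α
    set ατ : TS (Tau n) → Finset (Finset (Tau n)) := fun Q =>
      ((F.filter (fun p => Phi n p = Q)).sup (fun p => α p.1)).image (down n) with hατ
    have hατp : ∀ p ∈ F, ατ (Phi n p) = (α p.1).image (down n) := by
      intro p hp
      rw [hατ]
      simp only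
      rw [filter_eq_singleton Phi_injective hp, Finset.sup_singleton]
    set U : Finset ℕ := F.sup (fun p => (α p.1).sup id) with hU
    set HC : ℝ := ∑ p ∈ F, ∑ A ∈ α p.1, hcard n A with hHCdef
    -- the ℕ-side value
    have hUeq : (F.image Subtype.val).sup (fun P => (α P).sup id) = U := by
      rw [Finset.sup_image]; rfl
    have hSeq : ∑ P ∈ F.image Subtype.val, ∑ A ∈ α P, P.1 A
        = ∑ p ∈ F, ∑ A ∈ α p.1, p.1.1 A := by
      rw [Finset.sum_image (fun x hx y hy h => hvalinj h)]
    -- the τ-side value with assignment ατ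
    have hUτ : (F.image (Phi n)).sup (fun Q => (ατ Q).sup id) = down n U := by
      rw [Finset.sup_image, hU, down_sup']
      apply Finset.sup_congr rfl
      intro p hp
      show (ατ (Phi n p)).sup id = down n ((α p.1).sup id)
      rw [hατp p hp, Finset.sup_image, down_sup']
      rfl
    have hSτ : ∑ Q ∈ F.image (Phi n), ∑ B ∈ ατ Q, Q.1 B
        ≤ (∑ p ∈ F, ∑ A ∈ α p.1, p.1.1 A) - HC := by
      rw [Finset.sum_image (fun x hx y hy h => Phi_injective h)]
      have hper : ∀ p ∈ F, ∑ B ∈ ατ (Phi n p), (Phi n p).1 B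
          ≤ ∑ A ∈ α p.1, p.1.1 A - ∑ A ∈ α p.1, hcard n A := by
        intro p hp
        rw [hατp p hp]
        have h1 : ∑ B ∈ (α p.1).image (down n), (Phi n p).1 B
            ≤ ∑ A ∈ α p.1, (Phi n p).1 (down n A) :=
          sum_image_le _ _ _ (fun B => (Phi n p).nonneg B)
        have h2 : ∀ A, (Phi n p).1 (down n A) = p.1.1 A - hcard n A := by
          intro A
          show phiProf p.1 (down n A) = p.1.1 A - hcard n A
          unfold phiProf
          rw [up_down]
          have := p.2 A
          linarith
        have h3 : ∑ A ∈ α p.1, (Phi n p).1 (down n A)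
            = ∑ A ∈ α p.1, p.1.1 A - ∑ A ∈ α p.1, hcard n A := by
          rw [← Finset.sum_sub_distrib]
          exact Finset.sum_congr rfl (fun A _ => h2 A)
        linarith
      calc ∑ p ∈ F, ∑ B ∈ ατ (Phi n p), (Phi n p).1 B
          ≤ ∑ p ∈ F, (∑ A ∈ α p.1, p.1.1 A - ∑ A ∈ α p.1, hcard n A) :=
            Finset.sum_le_sum hper
        _ = (∑ p ∈ F, ∑ A ∈ α p.1, p.1.1 A) - HC := by
            rw [← Finset.sum_sub_distrib]
    have hHC : hcard n U ≤ HC := by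
      unfold hcard
      rw [hU, filter_sup F _ (fun k => ¬ n ≤ k)]
      calc ((F.sup fun p => ((α p.1).sup id).filter (fun k => ¬ n ≤ k)).card : ℝ)
          ≤ ∑ p ∈ F, ((((α p.1).sup id).filter (fun k => ¬ n ≤ k)).card : ℝ) := card_sup_le' _ _
        _ ≤ HC := by
            rw [hHCdef]
            apply Finset.sum_le_sum
            intro p hp
            rw [filter_sup (α p.1) id (fun k => ¬ n ≤ k)]
            unfold hcard
            exact card_sup_le' _ _
    have hbsplit : bdel U ≤ bdel (down n U) + hcard n U := by
      rw [bdel_down]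
      exact bdel_filter_split U _
    have hfinal := TS.dval_le_ddelta (F.image (Phi n)) ατ
    unfold TS.dval at hfinal ⊢
    rw [hUeq, hSeq]
    rw [hUτ] at hfinal
    linarith
  · apply TS.ddelta_le
    intro ατ
    set αℕ : TS ℕ → Finset (Finset ℕ) := fun P =>
      ((F.filter (fun p => p.1 = P)).sup (fun p => ατ (Phi n p))).image up with hαℕ
    have hαℕp : ∀ p ∈ F, αℕ p.1 = (ατ (Phi n p)).image up := by
      intro p hp
      rw [hαℕ]
      simp only
      rw [filter_eq_singleton hvalinj hp, Finset.sup_singleton]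
    have hUτ : (F.image (Phi n)).sup (fun Q => (ατ Q).sup id)
        = F.sup (fun p => (ατ (Phi n p)).sup id) := by
      rw [Finset.sup_image]; rfl
    have hUeq : (F.image Subtype.val).sup (fun P => (αℕ P).sup id)
        = up (F.sup (fun p => (ατ (Phi n p)).sup id)) := by
      rw [Finset.sup_image, up_sup']
      apply Finset.sup_congr rfl
      intro p hp
      show (αℕ p.1).sup id = up ((ατ (Phi n p)).sup id)
      rw [hαℕp p hp, Finset.sup_image, up_sup']
      rfl
    have hSeq : ∑ P ∈ F.image Subtype.val, ∑ A ∈ αℕ P, P.1 A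
        = ∑ Q ∈ F.image (Phi n), ∑ B ∈ ατ Q, Q.1 B := by
      rw [Finset.sum_image (fun x hx y hy h => hvalinj h),
        Finset.sum_image (fun x hx y hy h => Phi_injective h)]
      apply Finset.sum_congr rfl
      intro p hp
      rw [hαℕp p hp]
      rw [Finset.sum_image (fun x hx y hy h => up_injective h)]
      apply Finset.sum_congr rfl
      intro B hB
      rfl
    have hfinal := TS.dval_le_ddelta (F.image Subtype.val) αℕ
    unfold TS.dval at hfinal ⊢
    rw [hUτ, ← hSeq]
    rw [hUeq, bdel_up] at hfinal
    exact hfinal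

end HypEx
namespace HypEx
set_option linter.unusedSectionVars false
set_option linter.unusedVariables false
set_option maxHeartbeats 1000000

lemma image_sup {γ δ κ : Type*} [DecidableEq γ] [DecidableEq δ] [DecidableEq κ]
    (s : Finset κ) (f : κ → Finset γ) (φ : γ → δ) :
    (s.sup f).image φ = s.sup (fun x => (f x).image φ) := by
  induction s using Finset.induction_on with
  | empty => simp
  | @insert x s' hx ih =>
    rw [Finset.sup_insert, Finset.sup_insert, ← ih]
    show (f x ∪ s'.sup f).image φ = (f x).image φ ∪ (s'.sup f).image φ
    exact Finset.image_union _ _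

theorem restrict_hyperconvex (n : ℕ) : ((TS.TDiv ℕ).restrict (Sset n)).Hyperconvex := by
  classical
  intro r hr0 hval
  set Rτ : Finset (TS (Tau n)) → ℝ := fun G => r (G.image (Psi n)) with hRτ
  have hRτ0 : Rτ ∅ = 0 := by
    rw [hRτ]; simp only [Finset.image_empty]; exact hr0
  have himgΨinj : Function.Injective (fun G : Finset (TS (Tau n)) => G.image (Psi n)) := by
    intro G₁ G₂ h
    have := congrArg (fun H : Finset ↥(Sset n) => H.image (Phi n)) h
    simp only [Finset.image_image] at this
    have hcomp : (Phi n ∘ Psi n) = id := by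
      funext q; exact Phi_Psi q
    rw [hcomp, Finset.image_id, Finset.image_id] at this
    exact this
  have hVτ : ∀ 𝒢 : Finset (Finset (TS (Tau n))), TS.ddelta (𝒢.sup id) ≤ ∑ G ∈ 𝒢, Rτ G := by
    intro 𝒢
    set 𝒢' : Finset (Finset ↥(Sset n)) := 𝒢.image (fun G => G.image (Psi n)) with h𝒢'
    have hsum : ∑ G ∈ 𝒢, Rτ G = ∑ H ∈ 𝒢', r H := by
      rw [h𝒢', Finset.sum_image (fun x hx y hy h => himgΨinj h)]
    have hval' := hval 𝒢'
    have hdelta : ((TS.TDiv ℕ).restrict (Sset n)).delta (𝒢'.sup id)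
        = TS.ddelta (((𝒢'.sup id) : Finset ↥(Sset n)).image Subtype.val) := rfl
    have hpres := delta_pres n (𝒢'.sup id)
    have hsup' : (𝒢'.sup id).image (Phi n) = 𝒢.sup id := by
      rw [h𝒢', Finset.sup_image]
      have : (id ∘ fun G : Finset (TS (Tau n)) => G.image (Psi n))
          = fun G : Finset (TS (Tau n)) => G.image (Psi n) := rfl
      rw [this, image_sup]
      apply Finset.sup_congr rfl
      intro G hG
      rw [Finset.image_image]
      have hcomp : (Phi n ∘ Psi n) = id := by
        funext q; exact Phi_Psi q
      rw [hcomp, Finset.image_id]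
      rfl
    rw [hdelta, hpres, hsup'] at hval'
    rw [hsum]
    exact hval'
  obtain ⟨zτ, hz⟩ := TS.tdiv_hyperconvex (β := Tau n) Rτ hRτ0 hVτ
  refine ⟨Psi n zτ, ?_⟩
  intro Y
  have hdelta : ((TS.TDiv ℕ).restrict (Sset n)).delta (insert (Psi n zτ) Y)
      = TS.ddelta ((insert (Psi n zτ) Y).image Subtype.val) := rfl
  rw [hdelta, delta_pres n (insert (Psi n zτ) Y)]
  rw [Finset.image_insert, Phi_Psi]
  have hz' := hz (Y.image (Phi n))
  have hR : Rτ (Y.image (Phi n)) = r Y := by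
    rw [hRτ]
    simp only [Finset.image_image]
    have hcomp : (Psi n ∘ Phi n) = id := by
      funext p; exact Psi_Phi p
    rw [hcomp, Finset.image_id]
  rw [hR] at hz'
  exact hz'

end HypEx


/-- There exist a hyperconvex diversity `(X, δ)` whose induced metric
space is bounded and a decreasing sequence `(S n)` of subsets of `X` such that each
restriction `(S n, δ)` is a hyperconvex diversity while `⋂ n, S n = ∅`. -/
theorem exists_decreasing_hyperconvex_restrictions_empty_intersection :
    ∃ (X : Type) (_ : DecidableEq X) (D : Diversity X) (S : ℕ → Set X),
      D.Hyperconvex ∧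
      (∃ M : ℝ, ∀ x y : X, D.delta {x, y} ≤ M) ∧
      (∀ n : ℕ, S (n + 1) ⊆ S n) ∧
      (∀ n : ℕ, (D.restrict (S n)).Hyperconvex) ∧
      (⋂ n : ℕ, S n) = ∅ := by
  refine ⟨HypEx.TS ℕ, inferInstance, HypEx.TS.TDiv ℕ, HypEx.Sset, ?_, ⟨1, ?_⟩, ?_, ?_, ?_⟩
  · exact HypEx.TS.tdiv_hyperconvex
  · intro x y
    exact HypEx.TS.ddelta_pair_le_one x y
  · exact HypEx.Sset_antitone
  · exact HypEx.restrict_hyperconvex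
  · exact HypEx.Sset_inter_empty
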